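/- arXiv:2202.01189 — 6 statements merged into one kernel-verified Lean document; each statement's English description precedes it below -/
import Mathlib

section
/- Let k be a field and n ≥ 2, and let A = (a_1,…,a_p) and B = (b_1,…,b_q) be finite lists of vectors in ℕ^n. If rk A = n and rk B = n (i.e., both ⟨A⟩ and ⟨B⟩ are nondegenerate), then for no positive integers k_1, k_2 is C = k_1A ⋈ k_2B; that is, ⟨A⟩ and ⟨B⟩ cannot be glued. -/
open MvPolynomial

/-- The toric ideal `I_A` of a finite list `A` of vectors in `ℕ^n`:
the kernel of the `k`-algebra map `k[x_j : j ∈ σ] → k[t_1,…,t_n]`, `x_j ↦ t^{A j}`. -/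
noncomputable def toricIdeal (k : Type*) [CommRing k] {σ : Type*} {n : ℕ}
    (A : σ → Fin n → ℕ) : Ideal (MvPolynomial σ k) :=
  RingHom.ker (MvPolynomial.aeval (R := k) (fun j => ∏ i, MvPolynomial.X i ^ A j i) :
    MvPolynomial σ k →ₐ[k] MvPolynomial (Fin n) k)

/-- The semigroup ring `k[A] = k[x]/I_A`. -/
abbrev semigroupRing (k : Type*) [CommRing k] {σ : Type*} {n : ℕ}
    (A : σ → Fin n → ℕ) : Type _ :=
  MvPolynomial σ k ⧸ toricIdeal k A

/-- The list `C = k₁A ⊔ k₂B`. -/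
def glueList {n : ℕ} {σ τ : Type*} (k1 k2 : ℕ)
    (A : σ → Fin n → ℕ) (B : τ → Fin n → ℕ) : σ ⊕ τ → Fin n → ℕ :=
  Sum.elim (fun j i => k1 * A j i) (fun j i => k2 * B j i)

/-- The extension `I_A·R` of `I_A ⊆ k[x]` to `R = k[x,y]`. -/
noncomputable def extIdealLeft (k : Type*) [CommRing k] {n : ℕ} {σ : Type*} (τ : Type*)
    (A : σ → Fin n → ℕ) : Ideal (MvPolynomial (σ ⊕ τ) k) :=
  Ideal.map (MvPolynomial.rename (Sum.inl : σ → σ ⊕ τ)) (toricIdeal k A)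

/-- The extension `I_B·R` of `I_B ⊆ k[y]` to `R = k[x,y]`. -/
noncomputable def extIdealRight (k : Type*) [CommRing k] {n : ℕ} (σ : Type*) {τ : Type*}
    (B : τ → Fin n → ℕ) : Ideal (MvPolynomial (σ ⊕ τ) k) :=
  Ideal.map (MvPolynomial.rename (Sum.inr : τ → σ ⊕ τ)) (toricIdeal k B)

/-- `C = k₁A ⋈ k₂B` : `⟨C⟩` is a gluing of `⟨A⟩` and `⟨B⟩`, i.e.
`I_C = I_A·R + I_B·R + ⟨ρ⟩` for a binomial `ρ = x^c - y^d` with `ρ ∉ I_A·R + I_B·R`. -/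
def IsGluing (k : Type*) [CommRing k] {n : ℕ} {σ τ : Type*} [Fintype σ] [Fintype τ]
    (A : σ → Fin n → ℕ) (B : τ → Fin n → ℕ) (k1 k2 : ℕ) : Prop :=
  ∃ (c : σ → ℕ) (d : τ → ℕ),
    ((∏ j, X (Sum.inl j) ^ c j : MvPolynomial (σ ⊕ τ) k) - ∏ j, X (Sum.inr j) ^ d j) ∉
        extIdealLeft k τ A + extIdealRight k σ B ∧
    toricIdeal k (glueList k1 k2 A B) =
      extIdealLeft k τ A + extIdealRight k σ B +
        Ideal.span {((∏ j, X (Sum.inl j) ^ c j : MvPolynomial (σ ⊕ τ) k) -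
          ∏ j, X (Sum.inr j) ^ d j)}

/-- `⟨A⟩` and `⟨B⟩` can be glued. -/
def CanBeGlued (k : Type*) [CommRing k] {n : ℕ} {σ τ : Type*} [Fintype σ] [Fintype τ]
    (A : σ → Fin n → ℕ) (B : τ → Fin n → ℕ) : Prop :=
  ∃ k1 k2 : ℕ, 0 < k1 ∧ 0 < k2 ∧ IsGluing k A B k1 k2

/-- The `ℚ`-span of the columns of `A`. -/
def colSpanQ {n : ℕ} {σ : Type*} (A : σ → Fin n → ℕ) : Submodule ℚ (Fin n → ℚ) :=
  Submodule.span ℚ (Set.range fun j => fun i => (A j i : ℚ))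

/-- `rk A`, the rank over `ℚ` of the matrix whose columns are the vectors of `A`. -/
noncomputable def rkQ {n : ℕ} {σ : Type*} (A : σ → Fin n → ℕ) : ℕ :=
  Module.finrank ℚ (colSpanQ A)

/-- A gluable lattice point of `A` and `B`: a vector `u ∈ ℤ^n` with
`gcd(u_1,…,u_n) = 1` spanning `v(A) ∩ v(B)` over `ℚ`. -/
def IsGluableLatticePoint {n : ℕ} {σ τ : Type*} (A : σ → Fin n → ℕ) (B : τ → Fin n → ℕ)
    (u : Fin n → ℤ) : Prop :=
  Finset.univ.gcd u = 1 ∧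
  Submodule.span ℚ {fun i => ((u i : ℚ))} = colSpanQ A ⊓ colSpanQ B

/-- The additive submonoid of `ℤ^n` generated by the columns of `A`
(the semigroup `⟨A⟩`, viewed inside `ℤ^n`). -/
def intClosure {n : ℕ} {σ : Type*} (A : σ → Fin n → ℕ) : AddSubmonoid (Fin n → ℤ) :=
  AddSubmonoid.closure (Set.range fun j => fun i => (A j i : ℤ))

/-- The semigroup `⟨A⟩ ⊆ ℕ^n` generated by the columns of `A`. -/
def natClosure {n : ℕ} {σ : Type*} (A : σ → Fin n → ℕ) : AddSubmonoid (Fin n → ℕ) :=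
  AddSubmonoid.closure (Set.range A)

/-- The depth of a ring `S` with respect to an ideal `J`: the supremum of the lengths
of regular sequences on `S` consisting of elements of `J`. -/
noncomputable def idealDepth {S : Type*} [CommRing S] (J : Ideal S) : ℕ∞ :=
  sSup {m : ℕ∞ | ∃ rs : List S, (rs.length : ℕ∞) = m ∧ (∀ r ∈ rs, r ∈ J) ∧
    RingTheory.Sequence.IsRegular S rs}

/-- The maximal graded ideal of `k[A]`, generated by the images of the variables. -/
noncomputable def maxGradedIdeal (k : Type*) [CommRing k] {σ : Type*} {n : ℕ}
    (A : σ → Fin n → ℕ) : Ideal (semigroupRing k A) :=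
  Ideal.span (Set.range fun j => Ideal.Quotient.mk (toricIdeal k A) (X j))

/-- The depth of the semigroup ring `k[A]` with respect to its maximal graded ideal. -/
noncomputable def sgrDepth (k : Type*) [CommRing k] {σ : Type*} {n : ℕ}
    (A : σ → Fin n → ℕ) : ℕ∞ :=
  idealDepth (maxGradedIdeal k A)

/-- `k[A]` is Cohen–Macaulay: its depth equals its Krull dimension. -/
def sgrIsCohenMacaulay (k : Type*) [CommRing k] {σ : Type*} {n : ℕ}
    (A : σ → Fin n → ℕ) : Prop :=
  (sgrDepth k A : WithBot ℕ∞) = ringKrullDim (semigroupRing k A)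

open CategoryTheory in
/-- The projective dimension of a module `M` over `R`: the least `m` such that `M` admits a
projective resolution of length `m`. -/
noncomputable def modProjDim (R : Type*) [CommRing R] (M : ModuleCat R) : ℕ∞ :=
  sInf {m : ℕ∞ | ∃ P : ProjectiveResolution M,
    ∀ i : ℕ, m < (i : ℕ∞) → Limits.IsZero (P.complex.X i)}


-- helper lemmas proved earlier
lemma aux_prod_single_pow {k : Type*} [CommSemiring k] {G : Type*} [AddCommMonoid G]
    {ι : Type*} (s : Finset ι) (h : ι → G) (e : ι → ℕ) :
    ∏ j ∈ s, (AddMonoidAlgebra.single (h j) (1:k)) ^ e j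
      = AddMonoidAlgebra.single (∑ j ∈ s, e j • h j) 1 := by
  classical
  induction s using Finset.induction_on with
  | empty => simp [AddMonoidAlgebra.one_def]
  | insert _ _ hj ih =>
    rw [Finset.prod_insert hj, ih, Finset.sum_insert hj,
      AddMonoidAlgebra.single_pow, AddMonoidAlgebra.single_mul_single]
    simp

lemma aux_prod_pow_prod_pow {R : Type*} [CommSemiring R] {ι κ : Type*} [Fintype κ]
    (s : Finset ι) (m : ι → κ → ℕ) (e : ι → ℕ) :
    ∏ j ∈ s, (∏ i, (X i : MvPolynomial κ R) ^ m j i) ^ e j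
      = ∏ i, (X i : MvPolynomial κ R) ^ (∑ j ∈ s, e j * m j i) := by
  calc ∏ j ∈ s, (∏ i, (X i : MvPolynomial κ R) ^ m j i) ^ e j
      = ∏ j ∈ s, ∏ i, (X i : MvPolynomial κ R) ^ (m j i * e j) := by
        simp_rw [← Finset.prod_pow, pow_mul]
    _ = ∏ i, ∏ j ∈ s, (X i : MvPolynomial κ R) ^ (m j i * e j) := Finset.prod_comm
    _ = ∏ i, (X i : MvPolynomial κ R) ^ (∑ j ∈ s, e j * m j i) := by
        refine Finset.prod_congr rfl fun i _ => ?_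
        rw [Finset.prod_pow_eq_pow_sum]
        congr 1
        exact Finset.sum_congr rfl fun j _ => Nat.mul_comm _ _

set_option maxHeartbeats 1000000 in
lemma key_lemma (k : Type*) [Field k] {n p q : ℕ}
    (A : Fin p → Fin n → ℕ) (B : Fin q → Fin n → ℕ)
    (k1 k2 : ℕ) (c : Fin p → ℕ) (d : Fin q → ℕ)
    (hI : toricIdeal k (glueList k1 k2 A B) =
      extIdealLeft k (Fin q) A + extIdealRight k (Fin p) B +
        Ideal.span {((∏ j, X (Sum.inl j) ^ c j : MvPolynomial (Fin p ⊕ Fin q) k) -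
          ∏ j, X (Sum.inr j) ^ d j)})
    (γ : Fin p → ℤ) (δ : Fin q → ℤ)
    (hu : ∀ i, (k1:ℤ) * ∑ j, γ j * (A j i:ℤ) = (k2:ℤ) * ∑ l, δ l * (B l i:ℤ)) :
    ∃ m : ℤ, ∀ i, ∑ j, γ j * (A j i:ℤ) = m * ∑ j, (c j :ℤ) * (A j i:ℤ) := by
  classical
  set AZ : Fin p → Fin n → ℤ := fun j i => (A j i : ℤ) with hAZ
  set BZ : Fin q → Fin n → ℤ := fun l i => (B l i : ℤ) with hBZ
  set w1 : Fin n → ℤ := fun i => ∑ j, (c j : ℤ) * A j i with hw1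
  set w2 : Fin n → ℤ := fun i => ∑ l, (d l : ℤ) * B l i with hw2
  set S : AddSubgroup ((Fin n → ℤ) × (Fin n → ℤ)) :=
    AddSubgroup.zmultiples (w1, -w2) with hS
  set π : ((Fin n → ℤ) × (Fin n → ℤ)) →+ (((Fin n → ℤ) × (Fin n → ℤ)) ⧸ S) :=
    QuotientAddGroup.mk' S with hπ
  set vals : Fin p ⊕ Fin q →
      AddMonoidAlgebra k (((Fin n → ℤ) × (Fin n → ℤ)) ⧸ S) :=
    Sum.elim (fun j => AddMonoidAlgebra.single (π (AZ j, 0)) 1)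
      (fun l => AddMonoidAlgebra.single (π (0, BZ l)) 1) with hvals
  set ψ : MvPolynomial (Fin p ⊕ Fin q) k →ₐ[k]
      AddMonoidAlgebra k (((Fin n → ℤ) × (Fin n → ℤ)) ⧸ S) := aeval vals with hψ
  -- computation of ψ on products of powers of left variables
  have hsumA : ∀ e : Fin p → ℕ, (∑ j, e j • ((AZ j, 0) : (Fin n → ℤ) × (Fin n → ℤ)))
      = ((fun i => ∑ j, (e j : ℤ) * A j i), 0) := by
    intro e
    rw [Prod.ext_iff]
    constructor
    · rw [Prod.fst_sum]
      funext i
      rw [Finset.sum_apply]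
      exact Finset.sum_congr rfl fun j _ => by simp [AZ, mul_comm]
    · rw [Prod.snd_sum]; simp
  have hsumB : ∀ f : Fin q → ℕ, (∑ l, f l • ((0, BZ l) : (Fin n → ℤ) × (Fin n → ℤ)))
      = (0, (fun i => ∑ l, (f l : ℤ) * B l i)) := by
    intro f
    rw [Prod.ext_iff]
    constructor
    · rw [Prod.fst_sum]; simp
    · rw [Prod.snd_sum]
      funext i
      rw [Finset.sum_apply]
      exact Finset.sum_congr rfl fun l _ => by simp [BZ, mul_comm]
  have hmonoL : ∀ e : Fin p → ℕ,
      ψ (∏ j, X (Sum.inl j) ^ e j)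
        = AddMonoidAlgebra.single (π ((fun i => ∑ j, (e j : ℤ) * A j i), 0)) 1 := by
    intro e
    rw [map_prod]
    simp only [map_pow, hψ, aeval_X, hvals, Sum.elim_inl]
    rw [aux_prod_single_pow]
    congr 1
    rw [← hsumA e, map_sum]
    exact Finset.sum_congr rfl fun j _ => (map_nsmul π _ _).symm
  have hmonoR : ∀ f : Fin q → ℕ,
      ψ (∏ l, X (Sum.inr l) ^ f l)
        = AddMonoidAlgebra.single (π (0, (fun i => ∑ l, (f l : ℤ) * B l i))) 1 := by
    intro f
    rw [map_prod]
    simp only [map_pow, hψ, aeval_X, hvals, Sum.elim_inr]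
    rw [aux_prod_single_pow]
    congr 1
    rw [← hsumB f, map_sum]
    exact Finset.sum_congr rfl fun l _ => (map_nsmul π _ _).symm
  -- the kernel of ψ contains all three pieces
  have hL : extIdealLeft k (Fin q) A ≤ RingHom.ker ψ := by
    rw [extIdealLeft, Ideal.map_le_iff_le_comap]
    intro f hf
    rw [Ideal.mem_comap, RingHom.mem_ker, hψ, aeval_rename]
    set χ : MvPolynomial (Fin n) k →ₐ[k]
        AddMonoidAlgebra k (((Fin n → ℤ) × (Fin n → ℤ)) ⧸ S) :=
      aeval (fun i : Fin n => AddMonoidAlgebra.single (π ((Pi.single i 1 : Fin n → ℤ), 0)) (1:k))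
      with hχ
    have hfun : (vals ∘ Sum.inl) = fun j => χ (∏ i, (X i : MvPolynomial (Fin n) k) ^ A j i) := by
      funext j
      refine Eq.symm ?_
      rw [map_prod]
      simp only [map_pow, hχ, aeval_X]
      rw [aux_prod_single_pow]
      have : (∑ i, A j i • (((Pi.single i 1 : Fin n → ℤ), 0) :
          (Fin n → ℤ) × (Fin n → ℤ))) = (AZ j, 0) := by
        rw [Prod.ext_iff]
        constructor
        · rw [Prod.fst_sum]
          funext i'
          rw [Finset.sum_apply]
          simp [Pi.single_apply, AZ]
        · rw [Prod.snd_sum]; simp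
      rw [show (∑ i, A j i • π ((Pi.single i 1 : Fin n → ℤ), 0)) = π (AZ j, 0) by
        rw [← this, map_sum]; exact Finset.sum_congr rfl fun i _ => (map_nsmul π _ _).symm]
      simp [hvals]
    have hcomp : aeval (vals ∘ Sum.inl) f
        = χ (aeval (fun j => ∏ i, (X i : MvPolynomial (Fin n) k) ^ A j i) f) := by
      rw [hfun, ← comp_aeval, AlgHom.comp_apply]
    rw [hcomp]
    have : aeval (fun j => ∏ i, (X i : MvPolynomial (Fin n) k) ^ A j i) f = 0 := hf
    rw [this, map_zero]
  have hR : extIdealRight k (Fin p) B ≤ RingHom.ker ψ := by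
    rw [extIdealRight, Ideal.map_le_iff_le_comap]
    intro f hf
    rw [Ideal.mem_comap, RingHom.mem_ker, hψ, aeval_rename]
    set χ : MvPolynomial (Fin n) k →ₐ[k]
        AddMonoidAlgebra k (((Fin n → ℤ) × (Fin n → ℤ)) ⧸ S) :=
      aeval (fun i : Fin n => AddMonoidAlgebra.single (π (0, (Pi.single i 1 : Fin n → ℤ))) (1:k))
      with hχ
    have hfun : (vals ∘ Sum.inr) = fun l => χ (∏ i, (X i : MvPolynomial (Fin n) k) ^ B l i) := by
      funext l
      refine Eq.symm ?_
      rw [map_prod]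
      simp only [map_pow, hχ, aeval_X]
      rw [aux_prod_single_pow]
      have : (∑ i, B l i • ((0, (Pi.single i 1 : Fin n → ℤ)) :
          (Fin n → ℤ) × (Fin n → ℤ))) = (0, BZ l) := by
        rw [Prod.ext_iff]
        constructor
        · rw [Prod.fst_sum]; simp
        · rw [Prod.snd_sum]
          funext i'
          rw [Finset.sum_apply]
          simp [Pi.single_apply, BZ]
      rw [show (∑ i, B l i • π (0, (Pi.single i 1 : Fin n → ℤ))) = π (0, BZ l) by
        rw [← this, map_sum]; exact Finset.sum_congr rfl fun i _ => (map_nsmul π _ _).symm]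
      simp [hvals]
    have hcomp : aeval (vals ∘ Sum.inr) f
        = χ (aeval (fun l => ∏ i, (X i : MvPolynomial (Fin n) k) ^ B l i) f) := by
      rw [hfun, ← comp_aeval, AlgHom.comp_apply]
    rw [hcomp]
    have : aeval (fun l => ∏ i, (X i : MvPolynomial (Fin n) k) ^ B l i) f = 0 := hf
    rw [this, map_zero]
  have hρ : ψ ((∏ j, X (Sum.inl j) ^ c j : MvPolynomial (Fin p ⊕ Fin q) k)
      - ∏ j, X (Sum.inr j) ^ d j) = 0 := by
    rw [map_sub, hmonoL c, hmonoR d, sub_eq_zero]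
    congr 1
    rw [hπ, QuotientAddGroup.mk'_eq_mk']
    refine ⟨((-w1, w2) : (Fin n → ℤ) × (Fin n → ℤ)), ?_, by
      ext i <;> simp [w1, w2]⟩
    exact AddSubgroup.mem_zmultiples_iff.mpr ⟨-1, by ext i <;> simp⟩
  have hker : toricIdeal k (glueList k1 k2 A B) ≤ RingHom.ker ψ := by
    rw [hI]
    refine sup_le (sup_le hL hR) ?_
    rw [Ideal.span_le, Set.singleton_subset_iff]
    exact hρ
  -- the binomial witnessing u
  set γp : Fin p → ℕ := fun j => (γ j).toNat with hγp
  set γm : Fin p → ℕ := fun j => (-(γ j)).toNat with hγm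
  set δp : Fin q → ℕ := fun l => (δ l).toNat with hδp
  set δm : Fin q → ℕ := fun l => (-(δ l)).toNat with hδm
  have hγpm : ∀ j, (γp j : ℤ) - (γm j : ℤ) = γ j := fun j => by
    simp only [hγp, hγm]; omega
  have hδpm : ∀ l, (δp l : ℤ) - (δm l : ℤ) = δ l := fun l => by
    simp only [hδp, hδm]; omega
  have hfC : ((∏ j, X (Sum.inl j) ^ γp j) * (∏ l, X (Sum.inr l) ^ δm l)
      - (∏ j, X (Sum.inl j) ^ γm j) * (∏ l, X (Sum.inr l) ^ δp l)
      : MvPolynomial (Fin p ⊕ Fin q) k) ∈ toricIdeal k (glueList k1 k2 A B) := by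
    rw [toricIdeal, RingHom.mem_ker, map_sub, map_mul, map_mul]
    rw [map_prod, map_prod, map_prod, map_prod]
    simp only [map_pow, aeval_X]
    have hgl : ∀ j : Fin p, glueList k1 k2 A B (Sum.inl j) = fun i => k1 * A j i := fun j => rfl
    have hgr : ∀ l : Fin q, glueList k1 k2 A B (Sum.inr l) = fun i => k2 * B l i := fun l => rfl
    simp only [hgl, hgr]
    rw [aux_prod_pow_prod_pow, aux_prod_pow_prod_pow, aux_prod_pow_prod_pow,
      aux_prod_pow_prod_pow, ← Finset.prod_mul_distrib, ← Finset.prod_mul_distrib]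
    simp only [← pow_add]
    rw [sub_eq_zero]
    refine Finset.prod_congr rfl fun i _ => ?_
    congr 1
    have : ((∑ j, γp j * (k1 * A j i) + ∑ l, δm l * (k2 * B l i) : ℕ) : ℤ)
        = ((∑ j, γm j * (k1 * A j i) + ∑ l, δp l * (k2 * B l i) : ℕ) : ℤ) := by
      push_cast
      have h1 := hu i
      have e1 : ∀ j : Fin p, (γp j : ℤ) * ((k1:ℤ) * A j i)
          = (γm j : ℤ) * ((k1:ℤ) * A j i) + (k1:ℤ) * (γ j * A j i) := by
        intro j
        rw [← hγpm j]; ring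
      have e2 : ∀ l : Fin q, (δp l : ℤ) * ((k2:ℤ) * B l i)
          = (δm l : ℤ) * ((k2:ℤ) * B l i) + (k2:ℤ) * (δ l * B l i) := by
        intro l
        rw [← hδpm l]; ring
      rw [Finset.sum_congr rfl fun j _ => e1 j, Finset.sum_congr rfl fun l _ => e2 l]
      rw [Finset.sum_add_distrib, Finset.sum_add_distrib, ← Finset.mul_sum, ← Finset.mul_sum]
      rw [← hu i]
      ring
    exact_mod_cast this
  -- apply ψ
  have h0 := hker hfC
  rw [RingHom.mem_ker, map_sub, map_mul, map_mul, hmonoL γp, hmonoR δm, hmonoL γm,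
    hmonoR δp, AddMonoidAlgebra.single_mul_single, AddMonoidAlgebra.single_mul_single,
    one_mul, sub_eq_zero, ← map_add, ← map_add] at h0
  have hgeq := (AddMonoidAlgebra.single_left_inj (one_ne_zero)).mp h0
  rw [hπ, QuotientAddGroup.mk'_eq_mk'] at hgeq
  obtain ⟨z, hz, hzeq⟩ := hgeq
  obtain ⟨m, hm⟩ := AddSubgroup.mem_zmultiples_iff.mp hz
  refine ⟨-m, ?_⟩
  intro i
  have hfst := congrArg Prod.fst hzeq
  rw [← hm] at hfst
  have := congrFun hfst i
  simp only [Prod.fst_add, Prod.smul_fst, Pi.add_apply, Pi.smul_apply,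
    smul_eq_mul, Pi.zero_apply, add_zero] at this
  have hgoal : (∑ j, (γp j : ℤ) * A j i) + m * w1 i = ∑ j, (γm j : ℤ) * A j i := this
  have hsplit : ∑ j, γ j * (A j i : ℤ)
      = (∑ j, (γp j : ℤ) * A j i) - ∑ j, (γm j : ℤ) * A j i := by
    rw [← Finset.sum_sub_distrib]
    refine Finset.sum_congr rfl fun j _ => ?_
    rw [← hγpm j]; ring
  rw [hsplit, ← hgoal]
  simp only [hw1]
  ring


lemma aux_clear_denoms {p n : ℕ} (A : Fin p → Fin n → ℕ) (h : colSpanQ A = ⊤) (i0 : Fin n) :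
    ∃ (M : ℕ) (γ : Fin p → ℤ), 0 < M ∧
      ∀ i, ∑ j, γ j * (A j i : ℤ) = (M : ℤ) * (if i = i0 then 1 else 0) := by
  have he : (fun i => if i = i0 then (1:ℚ) else 0) ∈ colSpanQ A := by
    rw [h]; trivial
  rw [colSpanQ, Submodule.mem_span_range_iff_exists_fun] at he
  obtain ⟨r, hr⟩ := he
  set D : ℕ := ∏ j, (r j).den with hD
  have hDpos : 0 < D := Finset.prod_pos fun j _ => (r j).pos
  set γ : Fin p → ℤ := fun j => ((D / (r j).den : ℕ) : ℤ) * (r j).num with hγdef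
  refine ⟨D, γ, hDpos, ?_⟩
  have hγ : ∀ j, ((γ j : ℤ) : ℚ) = (D : ℚ) * r j := by
    intro j
    have hd : (r j).den ∣ D := Finset.dvd_prod_of_mem _ (Finset.mem_univ j)
    have hden : ((r j).den : ℚ) ≠ 0 := Nat.cast_ne_zero.mpr (r j).den_nz
    rw [hγdef]
    conv_rhs => rw [← Rat.num_div_den (r j)]
    rw [Int.cast_mul, Int.cast_natCast, Nat.cast_div hd hden, div_mul_eq_mul_div,
      ← mul_div_assoc]
  intro i
  have h1 : ∑ j, r j * (A j i : ℚ) = (if i = i0 then 1 else 0) := by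
    have := congrFun hr i
    simpa [Finset.sum_apply] using this
  have h2 : ((∑ j, γ j * (A j i : ℤ) : ℤ) : ℚ)
      = (((D : ℤ) * (if i = i0 then 1 else 0) : ℤ) : ℚ) := by
    calc ((∑ j, γ j * (A j i : ℤ) : ℤ) : ℚ) = ∑ j, ((γ j : ℤ) : ℚ) * (A j i : ℚ) := by
          push_cast; ring
      _ = ∑ j, (D : ℚ) * (r j * (A j i : ℚ)) := by
          refine Finset.sum_congr rfl fun j _ => ?_; rw [hγ j, mul_assoc]
      _ = (D : ℚ) * ∑ j, r j * (A j i : ℚ) := by rw [Finset.mul_sum]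
      _ = (D : ℚ) * (if i = i0 then 1 else 0) := by rw [h1]
      _ = (((D : ℤ) * (if i = i0 then 1 else 0) : ℤ) : ℚ) := by
          push_cast; split_ifs <;> simp
  exact_mod_cast h2

set_option maxHeartbeats 1000000 in
/-- If `n ≥ 2` and both `⟨A⟩` and `⟨B⟩` are nondegenerate
(`rk A = rk B = n`), then `⟨A⟩` and `⟨B⟩` cannot be glued. -/
theorem not_canBeGlued_of_nondegenerate (k : Type*) [Field k] {n p q : ℕ} (hn : 2 ≤ n)
    (A : Fin p → Fin n → ℕ) (B : Fin q → Fin n → ℕ)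
    (hA : rkQ A = n) (hB : rkQ B = n) :
    ¬ CanBeGlued k A B := by
  rintro ⟨k1, k2, hk1, hk2, c, d, -, hI⟩
  have hfr : Module.finrank ℚ (Fin n → ℚ) = n := by
    rw [Module.finrank_fintype_fun_eq_card, Fintype.card_fin]
  have hAtop : colSpanQ A = ⊤ := Submodule.eq_top_of_finrank_eq (by rw [hfr]; exact hA)
  have hBtop : colSpanQ B = ⊤ := Submodule.eq_top_of_finrank_eq (by rw [hfr]; exact hB)
  have main : ∀ i0 : Fin n, ∃ (N : ℕ) (m : ℤ), 0 < N ∧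
      ∀ i, m * ∑ j, (c j : ℤ) * (A j i : ℤ) = (N : ℤ) * (if i = i0 then 1 else 0) := by
    intro i0
    obtain ⟨MA, γA, hMA, hγA⟩ := aux_clear_denoms A hAtop i0
    obtain ⟨MB, δB, hMB, hδB⟩ := aux_clear_denoms B hBtop i0
    have hu : ∀ i, (k1:ℤ) * ∑ j, ((k2 * MB : ℤ) * γA j) * (A j i : ℤ)
        = (k2:ℤ) * ∑ l, ((k1 * MA : ℤ) * δB l) * (B l i : ℤ) := by
      intro i
      have e1 : ∑ j, ((k2 * MB : ℤ) * γA j) * (A j i : ℤ)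
          = (k2 * MB : ℤ) * ∑ j, γA j * (A j i : ℤ) := by
        rw [Finset.mul_sum]; exact Finset.sum_congr rfl fun j _ => by ring
      have e2 : ∑ l, ((k1 * MA : ℤ) * δB l) * (B l i : ℤ)
          = (k1 * MA : ℤ) * ∑ l, δB l * (B l i : ℤ) := by
        rw [Finset.mul_sum]; exact Finset.sum_congr rfl fun l _ => by ring
      rw [e1, e2, hγA i, hδB i]
      ring
    obtain ⟨m, hm⟩ := key_lemma k A B k1 k2 c d hI _ _ hu
    refine ⟨k2 * MB * MA, m, by positivity, ?_⟩
    intro i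
    have h1 := hm i
    have e1 : ∑ j, ((k2 * MB : ℤ) * γA j) * (A j i : ℤ)
        = (k2 * MB : ℤ) * ∑ j, γA j * (A j i : ℤ) := by
      rw [Finset.mul_sum]; exact Finset.sum_congr rfl fun j _ => by ring
    rw [e1, hγA i] at h1
    rw [← h1]
    push_cast
    ring
  have hn0 : 0 < n := by omega
  have hn1 : 1 < n := by omega
  set i0 : Fin n := ⟨0, hn0⟩ with hi0
  set i1 : Fin n := ⟨1, hn1⟩ with hi1
  obtain ⟨N0, m0, hN0, h0⟩ := main i0
  obtain ⟨N1, m1, hN1, h1⟩ := main i1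
  have hne : i1 ≠ i0 := by
    simp [hi0, hi1, Fin.ext_iff]
  have h00 := h0 i0
  have h01 := h0 i1
  have h10 := h1 i0
  have h11 := h1 i1
  rw [if_pos rfl] at h00
  rw [if_neg hne] at h01
  rw [if_neg (Ne.symm hne)] at h10
  rw [if_pos rfl] at h11
  have hcontr : (N0 : ℤ) * N1 = 0 := by
    calc (N0 : ℤ) * N1 = (m0 * ∑ j, (c j : ℤ) * (A j i0 : ℤ))
          * (m1 * ∑ j, (c j : ℤ) * (A j i1 : ℤ)) := by
          rw [h00, h11]; ring
      _ = (m1 * ∑ j, (c j : ℤ) * (A j i0 : ℤ))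
          * (m0 * ∑ j, (c j : ℤ) * (A j i1 : ℤ)) := by ring
      _ = 0 := by rw [h10, h01]; ring
  have hpos : (0:ℤ) < (N0 : ℤ) * N1 := by positivity
  exact absurd hcontr hpos.ne'
end

section
/- Let k be a field, n ≥ 1, and let A = (a_1,…,a_p) and B = (b_1,…,b_q) be finite lists of vectors in ℕ^n. If C = k_1A ⋈ k_2B for some positive integers k_1, k_2 and rk(A|B) = n (the glued semigroup is nondegenerate), then rk A + rk B = n + 1. In particular, if moreover rk A = n, then rk B = 1. -/
open MvPolynomial

-- monomial form
lemma mon_eq_monomial {R : Type*} [CommSemiring R] {n : ℕ} (e : Fin n → ℕ) :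
    (∏ i, (X i : MvPolynomial (Fin n) R) ^ e i) =
      monomial (Finsupp.equivFunOnFinite.symm e) 1 := by
  rw [monomial_eq, C_1, one_mul, Finsupp.prod_fintype]
  · rfl
  · intro i; exact pow_zero _

lemma mon_inj {R : Type*} [CommSemiring R] [Nontrivial R] {n : ℕ} {e f : Fin n → ℕ}
    (h : (∏ i, (X i : MvPolynomial (Fin n) R) ^ e i) = ∏ i, X i ^ f i) : e = f := by
  rw [mon_eq_monomial, mon_eq_monomial] at h
  have := monomial_left_injective (R := R) one_ne_zero h
  exact Finsupp.equivFunOnFinite.symm.injective this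

lemma prod_prod_pow {R : Type*} [CommSemiring R] {n m : ℕ} (v : Fin m → Fin n → ℕ)
    (e : Fin m → ℕ) :
    (∏ j, (∏ i, (X i : MvPolynomial (Fin n) R) ^ v j i) ^ e j) =
      ∏ i, X i ^ (∑ j, e j * v j i) := by
  simp_rw [← Finset.prod_pow, ← pow_mul, Finset.prod_comm (s := Finset.univ (α := Fin m)),
    Finset.prod_pow_eq_pow_sum]
  simp [mul_comm]

lemma mon_mul {R : Type*} [CommSemiring R] {n : ℕ} (e f : Fin n → ℕ) :
    (∏ i, (X i : MvPolynomial (Fin n) R) ^ e i) * (∏ i, X i ^ f i) =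
      ∏ i, X i ^ (e i + f i) := by
  rw [← Finset.prod_mul_distrib]
  exact Finset.prod_congr rfl fun i _ => (pow_add _ _ _).symm

lemma prod_single_one {R : Type*} [CommSemiring R] {G : Type*} [AddCommMonoid G]
    {m : ℕ} (e : Fin m → G) :
    (∏ j, AddMonoidAlgebra.single (e j) (1 : R)) =
      AddMonoidAlgebra.single (∑ j, e j) 1 := by
  classical
  induction (Finset.univ : Finset (Fin m)) using Finset.cons_induction with
  | empty => simp [AddMonoidAlgebra.one_def]
  | cons a s ha ih =>
      rw [Finset.prod_cons, Finset.sum_cons, ih, AddMonoidAlgebra.single_mul_single, one_mul]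

lemma prod_single_pow {R : Type*} [CommSemiring R] {G : Type*} [AddCommMonoid G]
    {m : ℕ} (e : Fin m → G) (c : Fin m → ℕ) :
    (∏ j, AddMonoidAlgebra.single (e j) (1 : R) ^ c j) =
      AddMonoidAlgebra.single (∑ j, c j • e j) 1 := by
  simp_rw [AddMonoidAlgebra.single_pow, one_pow]
  exact prod_single_one _






lemma hden (x : ℚ) : x * (x.den : ℚ) = (x.num : ℚ) := by
  rw [← eq_div_iff (by positivity), Rat.num_div_den]

lemma common_denom {ι : Type*} [Fintype ι] (r : ι → ℚ) :
    ∃ N : ℕ, 0 < N ∧ ∀ j, ∃ z : ℤ, (N : ℚ) * r j = z := by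
  classical
  refine ⟨∏ j, (r j).den, Finset.prod_pos fun j _ => (r j).pos, fun j => ?_⟩
  obtain ⟨m, hm⟩ := Finset.dvd_prod_of_mem (fun j => (r j).den) (Finset.mem_univ j)
  refine ⟨(r j).num * m, ?_⟩
  rw [hm]
  push_cast
  rw [show ((r j).den : ℚ) * (m : ℚ) * r j = r j * ((r j).den : ℚ) * m by ring, hden]

lemma dot_indicator {n : ℕ} (g : Fin n → ℤ) (a b : ℤ) (i i0 : Fin n) :
    ∑ i', (a * (if i' = i then 1 else 0) - b * (if i' = i0 then 1 else 0)) * g i' =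
      a * g i - b * g i0 := by
  simp [sub_mul, Finset.sum_sub_distrib, ite_mul, mul_ite, mul_assoc]

section Key
variable (k : Type*) [Field k] {n p q : ℕ}

noncomputable def psi {n p q : ℕ} (k1 : ℕ)
    (A : Fin p → Fin n → ℕ) (lam : Fin n → ℤ) :
    MvPolynomial (Fin p ⊕ Fin q) k →ₐ[k] AddMonoidAlgebra k ℤ :=
  aeval (Sum.elim
    (fun j => AddMonoidAlgebra.single (∑ i, lam i * ((k1 * A j i : ℕ) : ℤ)) 1)
    (fun _ => 1))

lemma psi_left (k1 : ℕ) (A : Fin p → Fin n → ℕ) (lam : Fin n → ℤ)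
    (g : MvPolynomial (Fin p) k) (hg : g ∈ toricIdeal k A) :
    psi k (q := q) k1 A lam (rename Sum.inl g) = 0 := by
  have hcomp : (psi k (q := q) k1 A lam).comp (rename Sum.inl) =
      ((aeval (fun i => AddMonoidAlgebra.single ((k1 : ℤ) * lam i) (1 : k)))).comp
        (aeval (R := k) (fun j => ∏ i, X i ^ A j i)) := by
    apply MvPolynomial.algHom_ext
    intro j
    simp only [AlgHom.comp_apply, rename_X, aeval_X, psi, Sum.elim_inl, map_prod, map_pow]
    rw [prod_single_pow]
    congr 1
    refine Finset.sum_congr rfl fun i _ => ?_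
    push_cast [nsmul_eq_mul]
    ring
  have := congrArg (fun F => F g) hcomp
  simp only [AlgHom.comp_apply] at this
  rw [this]
  have hg0 : (aeval (R := k) (fun j => ∏ i, X i ^ A j i)) g = 0 := hg
  rw [hg0, map_zero]

lemma psi_right (k1 : ℕ) (A : Fin p → Fin n → ℕ) (B : Fin q → Fin n → ℕ) (lam : Fin n → ℤ)
    (g : MvPolynomial (Fin q) k) (hg : g ∈ toricIdeal k B) :
    psi k (q := q) k1 A lam (rename Sum.inr g) = 0 := by
  have hcomp : (psi k (q := q) k1 A lam).comp (rename Sum.inr) =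
      ((aeval (fun _ : Fin n => (1 : AddMonoidAlgebra k ℤ)))).comp
        (aeval (R := k) (fun j => ∏ i, X i ^ B j i)) := by
    apply MvPolynomial.algHom_ext
    intro j
    simp [psi]
  have := congrArg (fun F => F g) hcomp
  simp only [AlgHom.comp_apply] at this
  rw [this]
  have hg0 : (aeval (R := k) (fun j => ∏ i, X i ^ B j i)) g = 0 := hg
  rw [hg0, map_zero]

lemma key (k1 k2 : ℕ) (A : Fin p → Fin n → ℕ) (B : Fin q → Fin n → ℕ)
    (c : Fin p → ℕ) (d : Fin q → ℕ)
    (hIC : toricIdeal k (glueList k1 k2 A B) =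
      extIdealLeft k (Fin q) A + extIdealRight k (Fin p) B +
        Ideal.span {((∏ j, X (Sum.inl j) ^ c j : MvPolynomial (Fin p ⊕ Fin q) k) -
          ∏ j, X (Sum.inr j) ^ d j)})
    (lam : Fin n → ℤ)
    (hlam : ∑ i, lam i * (∑ j, (c j : ℤ) * ((k1 * A j i : ℕ) : ℤ)) = 0)
    (α : Fin p → ℤ) (β : Fin q → ℤ)
    (hu : ∀ i, ∑ j, α j * ((k1 * A j i : ℕ) : ℤ) = ∑ j, β j * ((k2 * B j i : ℕ) : ℤ)) :
    ∑ i, lam i * ∑ j, α j * ((k1 * A j i : ℕ) : ℤ) = 0 := by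
  classical
  set ψ := psi k (q := q) k1 A lam with hψ
  set sA : Fin p → ℤ := fun j => ∑ i, lam i * ((k1 * A j i : ℕ) : ℤ) with hsA
  -- ψ kills the toric ideal of the glued list
  have hker : toricIdeal k (glueList k1 k2 A B) ≤ RingHom.ker ψ.toRingHom := by
    rw [hIC]
    refine sup_le (sup_le ?_ ?_) ?_
    · rw [extIdealLeft, Ideal.map_le_iff_le_comap]
      intro g hg
      exact psi_left k k1 A lam g hg
    · rw [extIdealRight, Ideal.map_le_iff_le_comap]
      intro g hg
      exact psi_right k k1 A B lam g hg
    · rw [Ideal.span_le, Set.singleton_subset_iff]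
      have h1 : ψ (∏ j, X (Sum.inl j) ^ c j) = AddMonoidAlgebra.single (0 : ℤ) 1 := by
        rw [map_prod]
        simp only [map_pow, hψ, psi, aeval_X, Sum.elim_inl]
        rw [prod_single_pow]
        congr 1
        rw [← hlam]
        simp_rw [nsmul_eq_mul, Finset.mul_sum]
        rw [Finset.sum_comm]
        refine Finset.sum_congr rfl fun i _ => ?_
        exact Finset.sum_congr rfl fun j _ => by push_cast; ring
      have h2 : ψ (∏ j, X (Sum.inr j) ^ d j) = 1 := by
        rw [map_prod]
        simp [hψ, psi]
      simp only [SetLike.mem_coe, RingHom.mem_ker, AlgHom.toRingHom_eq_coe,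
        RingHom.coe_coe, map_sub, h1, h2]
      rw [AddMonoidAlgebra.one_def]
      simp
  -- the binomial f attached to (α, β)
  set f : MvPolynomial (Fin p ⊕ Fin q) k :=
    (∏ j, X (Sum.inl j) ^ (α j).toNat) * (∏ j, X (Sum.inr j) ^ (-(β j)).toNat) -
    (∏ j, X (Sum.inl j) ^ (-(α j)).toNat) * (∏ j, X (Sum.inr j) ^ (β j).toNat) with hf
  have hfmem : f ∈ toricIdeal k (glueList k1 k2 A B) := by
    have : (aeval (R := k) (fun j => ∏ i, X i ^ glueList k1 k2 A B j i) :
        MvPolynomial (Fin p ⊕ Fin q) k →ₐ[k] MvPolynomial (Fin n) k) f = 0 := by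
      rw [hf]
      simp only [map_sub, map_mul, map_prod, map_pow, aeval_X]
      have gl1 : ∀ (j : Fin p) (i : Fin n), glueList k1 k2 A B (Sum.inl j) i = k1 * A j i :=
        fun j i => rfl
      have gl2 : ∀ (j : Fin q) (i : Fin n), glueList k1 k2 A B (Sum.inr j) i = k2 * B j i :=
        fun j i => rfl
      simp_rw [gl1, gl2, prod_prod_pow, mon_mul]
      rw [sub_eq_zero]
      congr 1
      funext i
      congr 1
      have e1 : ∑ j, ((α j).toNat : ℤ) * ((k1 : ℤ) * (A j i : ℤ)) -
          ∑ j, (((-(α j)).toNat : ℕ) : ℤ) * ((k1 : ℤ) * (A j i : ℤ)) =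
          ∑ j, α j * ((k1 : ℤ) * (A j i : ℤ)) := by
        rw [← Finset.sum_sub_distrib]
        refine Finset.sum_congr rfl fun j _ => ?_
        rw [← sub_mul]
        congr 1
        omega
      have e2 : ∑ j, (((-(β j)).toNat : ℕ) : ℤ) * ((k2 : ℤ) * (B j i : ℤ)) -
          ∑ j, ((β j).toNat : ℤ) * ((k2 : ℤ) * (B j i : ℤ)) =
          -∑ j, β j * ((k2 : ℤ) * (B j i : ℤ)) := by
        rw [← Finset.sum_sub_distrib, ← Finset.sum_neg_distrib]
        refine Finset.sum_congr rfl fun j _ => ?_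
        rw [← sub_mul, ← neg_mul]
        congr 1
        omega
      have hu' := hu i
      push_cast at hu'
      have hcast : ((∑ j, (α j).toNat * (k1 * A j i) + ∑ j, (-(β j)).toNat * (k2 * B j i) : ℕ) : ℤ)
          = ((∑ j, (-(α j)).toNat * (k1 * A j i) + ∑ j, (β j).toNat * (k2 * B j i) : ℕ) : ℤ) := by
        push_cast
        linarith [e1, e2, hu']
      exact_mod_cast hcast
    exact this
  have hψf : ψ f = 0 := hker hfmem
  -- compute ψ f
  have hψf' : AddMonoidAlgebra.single (∑ j, (α j).toNat • sA j) (1 : k) =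
      AddMonoidAlgebra.single (∑ j, (-(α j)).toNat • sA j) 1 := by
    rw [hf] at hψf
    simp only [map_sub, map_mul, map_prod, map_pow, hψ, psi, aeval_X, Sum.elim_inl,
      Sum.elim_inr, one_pow, Finset.prod_const_one, mul_one] at hψf
    rw [prod_single_pow, prod_single_pow, sub_eq_zero] at hψf
    exact hψf
  have hL : (∑ j, (α j).toNat • sA j) = ∑ j, (-(α j)).toNat • sA j :=
    AddMonoidAlgebra.single_left_injective (by exact one_ne_zero) hψf'
  have swap : ∑ i, lam i * ∑ j, α j * ((k1 * A j i : ℕ) : ℤ) = ∑ j, α j * sA j := by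
    simp_rw [Finset.mul_sum, hsA]
    rw [Finset.sum_comm]
    refine Finset.sum_congr rfl fun j _ => ?_
    rw [Finset.mul_sum]
    exact Finset.sum_congr rfl fun i _ => by ring
  rw [swap]
  have : ∑ j, α j * sA j = (∑ j, (α j).toNat • sA j) - ∑ j, (-(α j)).toNat • sA j := by
    rw [← Finset.sum_sub_distrib]
    refine Finset.sum_congr rfl fun j _ => ?_
    simp_rw [nsmul_eq_mul]
    rw [← sub_mul]
    congr 1
    omega
  rw [this, hL, sub_self]


-- ρ ∈ I_C gives equality of the two exponent vectors
lemma w_eq (k1 k2 : ℕ) (A : Fin p → Fin n → ℕ) (B : Fin q → Fin n → ℕ)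
    (c : Fin p → ℕ) (d : Fin q → ℕ)
    (hIC : toricIdeal k (glueList k1 k2 A B) =
      extIdealLeft k (Fin q) A + extIdealRight k (Fin p) B +
        Ideal.span {((∏ j, X (Sum.inl j) ^ c j : MvPolynomial (Fin p ⊕ Fin q) k) -
          ∏ j, X (Sum.inr j) ^ d j)}) :
    (fun i => ∑ j, c j * (k1 * A j i)) = (fun i => ∑ j, d j * (k2 * B j i)) := by
  have hρ : ((∏ j, X (Sum.inl j) ^ c j : MvPolynomial (Fin p ⊕ Fin q) k) -
      ∏ j, X (Sum.inr j) ^ d j) ∈ toricIdeal k (glueList k1 k2 A B) := by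
    rw [hIC]
    exact Submodule.mem_sup_right (Ideal.subset_span rfl)
  have h0 : (aeval (R := k) (fun j => ∏ i, X i ^ glueList k1 k2 A B j i) :
      MvPolynomial (Fin p ⊕ Fin q) k →ₐ[k] MvPolynomial (Fin n) k)
      ((∏ j, X (Sum.inl j) ^ c j : MvPolynomial (Fin p ⊕ Fin q) k) -
        ∏ j, X (Sum.inr j) ^ d j) = 0 := hρ
  simp only [map_sub, map_prod, map_pow, aeval_X] at h0
  have gl1 : ∀ (j : Fin p) (i : Fin n), glueList k1 k2 A B (Sum.inl j) i = k1 * A j i :=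
    fun j i => rfl
  have gl2 : ∀ (j : Fin q) (i : Fin n), glueList k1 k2 A B (Sum.inr j) i = k2 * B j i :=
    fun j i => rfl
  simp_rw [gl1, gl2, prod_prod_pow] at h0
  rw [sub_eq_zero] at h0
  exact mon_inj h0

-- if w = 0 then ρ ∈ extL + extR
lemma w_ne_zero (k1 k2 : ℕ) (hk1 : 0 < k1) (hk2 : 0 < k2)
    (A : Fin p → Fin n → ℕ) (B : Fin q → Fin n → ℕ)
    (c : Fin p → ℕ) (d : Fin q → ℕ)
    (hρnot : ((∏ j, X (Sum.inl j) ^ c j : MvPolynomial (Fin p ⊕ Fin q) k) -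
        ∏ j, X (Sum.inr j) ^ d j) ∉
      extIdealLeft k (Fin q) A + extIdealRight k (Fin p) B)
    (hwB : (fun i => ∑ j, c j * (k1 * A j i)) = (fun i => ∑ j, d j * (k2 * B j i))) :
    ∃ i0, ∑ j, c j * (k1 * A j i0) ≠ 0 := by
  by_contra hw
  push_neg at hw
  apply hρnot
  have hA0 : ∀ i, ∑ j, c j * A j i = 0 := by
    intro i
    have h1 := hw i
    rw [Finset.sum_eq_zero_iff] at h1 ⊢
    intro j hj
    have h2 := h1 j hj
    rcases Nat.mul_eq_zero.mp h2 with h | h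
    · simp [h]
    · rcases Nat.mul_eq_zero.mp h with h' | h'
      · omega
      · simp [h']
  have hB0 : ∀ i, ∑ j, d j * B j i = 0 := by
    intro i
    have h1 := (congrFun hwB i).symm.trans (hw i)
    rw [Finset.sum_eq_zero_iff] at h1 ⊢
    intro j hj
    have h2 := h1 j hj
    rcases Nat.mul_eq_zero.mp h2 with h | h
    · simp [h]
    · rcases Nat.mul_eq_zero.mp h with h' | h'
      · omega
      · simp [h']
  have g1mem : ((∏ j, X j ^ c j : MvPolynomial (Fin p) k) - 1) ∈ toricIdeal k A := by
    have : (aeval (R := k) (fun j => ∏ i, X i ^ A j i) :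
        MvPolynomial (Fin p) k →ₐ[k] MvPolynomial (Fin n) k)
        ((∏ j, X j ^ c j : MvPolynomial (Fin p) k) - 1) = 0 := by
      simp only [map_sub, map_prod, map_pow, aeval_X, map_one]
      rw [prod_prod_pow]
      simp only [hA0, pow_zero, Finset.prod_const_one, sub_self]
    exact this
  have g2mem : ((∏ j, X j ^ d j : MvPolynomial (Fin q) k) - 1) ∈ toricIdeal k B := by
    have : (aeval (R := k) (fun j => ∏ i, X i ^ B j i) :
        MvPolynomial (Fin q) k →ₐ[k] MvPolynomial (Fin n) k)
        ((∏ j, X j ^ d j : MvPolynomial (Fin q) k) - 1) = 0 := by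
      simp only [map_sub, map_prod, map_pow, aeval_X, map_one]
      rw [prod_prod_pow]
      simp only [hB0, pow_zero, Finset.prod_const_one, sub_self]
    exact this
  have m1 : ((∏ j, X (Sum.inl j) ^ c j : MvPolynomial (Fin p ⊕ Fin q) k) - 1) ∈
      extIdealLeft k (Fin q) A := by
    have := Ideal.mem_map_of_mem (MvPolynomial.rename (Sum.inl : Fin p → Fin p ⊕ Fin q)) g1mem
    simpa only [extIdealLeft, map_sub, map_prod, map_pow, rename_X, map_one] using this
  have m2 : ((∏ j, X (Sum.inr j) ^ d j : MvPolynomial (Fin p ⊕ Fin q) k) - 1) ∈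
      extIdealRight k (Fin p) B := by
    have := Ideal.mem_map_of_mem (MvPolynomial.rename (Sum.inr : Fin q → Fin p ⊕ Fin q)) g2mem
    simpa only [extIdealRight, map_sub, map_prod, map_pow, rename_X, map_one] using this
  have : ((∏ j, X (Sum.inl j) ^ c j : MvPolynomial (Fin p ⊕ Fin q) k) -
      ∏ j, X (Sum.inr j) ^ d j) =
      (((∏ j, X (Sum.inl j) ^ c j : MvPolynomial (Fin p ⊕ Fin q) k) - 1) -
        ((∏ j, X (Sum.inr j) ^ d j : MvPolynomial (Fin p ⊕ Fin q) k) - 1)) := by ring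
  rw [this]
  exact sub_mem (Submodule.mem_sup_left m1) (Submodule.mem_sup_right m2)

end Key



section Main
variable (k : Type*) [Field k] {n p q : ℕ}

lemma inf_eq_span (k1 k2 : ℕ) (hk1 : 0 < k1) (hk2 : 0 < k2)
    (A : Fin p → Fin n → ℕ) (B : Fin q → Fin n → ℕ)
    (c : Fin p → ℕ) (d : Fin q → ℕ)
    (hρnot : ((∏ j, X (Sum.inl j) ^ c j : MvPolynomial (Fin p ⊕ Fin q) k) -
        ∏ j, X (Sum.inr j) ^ d j) ∉
      extIdealLeft k (Fin q) A + extIdealRight k (Fin p) B)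
    (hIC : toricIdeal k (glueList k1 k2 A B) =
      extIdealLeft k (Fin q) A + extIdealRight k (Fin p) B +
        Ideal.span {((∏ j, X (Sum.inl j) ^ c j : MvPolynomial (Fin p ⊕ Fin q) k) -
          ∏ j, X (Sum.inr j) ^ d j)}) :
    colSpanQ A ⊓ colSpanQ B =
      Submodule.span ℚ {(fun i => ((∑ j, c j * (k1 * A j i) : ℕ) : ℚ) : Fin n → ℚ)} := by
  classical
  have hwB := w_eq k k1 k2 A B c d hIC
  obtain ⟨i0, hi0⟩ := w_ne_zero k k1 k2 hk1 hk2 A B c d hρnot hwB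
  set wQ : Fin n → ℚ := fun i => ((∑ j, c j * (k1 * A j i) : ℕ) : ℚ) with hwQ
  have haA : wQ ∈ colSpanQ A := by
    rw [colSpanQ, Submodule.mem_span_range_iff_exists_fun]
    refine ⟨fun j => ((c j * k1 : ℕ) : ℚ), ?_⟩
    funext i
    rw [Finset.sum_apply]
    simp only [Pi.smul_apply, smul_eq_mul, hwQ]
    push_cast
    exact Finset.sum_congr rfl fun j _ => by ring
  have haB : wQ ∈ colSpanQ B := by
    rw [colSpanQ, Submodule.mem_span_range_iff_exists_fun]
    refine ⟨fun j => ((d j * k2 : ℕ) : ℚ), ?_⟩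
    funext i
    rw [Finset.sum_apply]
    simp only [Pi.smul_apply, smul_eq_mul, hwQ]
    rw [congrFun hwB i]
    push_cast
    exact Finset.sum_congr rfl fun j _ => by ring
  refine le_antisymm ?_ ?_
  · intro v hv
    obtain ⟨hv1, hv2⟩ := Submodule.mem_inf.mp hv
    rw [colSpanQ, Submodule.mem_span_range_iff_exists_fun] at hv1 hv2
    obtain ⟨r, hr⟩ := hv1
    obtain ⟨s, hs⟩ := hv2
    obtain ⟨N, hNpos, hNint⟩ := common_denom (Sum.elim r s)
    choose z hz using hNint
    set α : Fin p → ℤ := fun j => k2 * z (Sum.inl j) with hα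
    set β : Fin q → ℤ := fun j => k1 * z (Sum.inr j) with hβ
    set K : ℚ := (k1 : ℚ) * k2 * N with hK
    have hKne : K ≠ 0 := by
      rw [hK]
      push_cast
      positivity
    have hvr : ∀ i, v i = ∑ j, r j * (A j i : ℚ) := by
      intro i
      rw [← hr, Finset.sum_apply]
      simp
    have hvs : ∀ i, v i = ∑ j, s j * (B j i : ℚ) := by
      intro i
      rw [← hs, Finset.sum_apply]
      simp
    have hKA : ∀ i, ((∑ j, α j * ((k1 * A j i : ℕ) : ℤ) : ℤ) : ℚ) = K * v i := by
      intro i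
      rw [hvr i, Finset.mul_sum]
      push_cast
      refine Finset.sum_congr rfl fun (j : Fin p) _ => ?_
      have hzj : ((z (Sum.inl j) : ℚ)) = (N : ℚ) * r j := by
        rw [← hz (Sum.inl j)]; simp
      simp only [hα]
      push_cast
      rw [hzj, hK]
      ring
    have hKB : ∀ i, ((∑ j, β j * ((k2 * B j i : ℕ) : ℤ) : ℤ) : ℚ) = K * v i := by
      intro i
      rw [hvs i, Finset.mul_sum]
      push_cast
      refine Finset.sum_congr rfl fun (j : Fin q) _ => ?_
      have hzj : ((z (Sum.inr j) : ℚ)) = (N : ℚ) * s j := by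
        rw [← hz (Sum.inr j)]; simp
      simp only [hβ]
      push_cast
      rw [hzj, hK]
      ring
    have hu : ∀ i, ∑ j, α j * ((k1 * A j i : ℕ) : ℤ) = ∑ j, β j * ((k2 * B j i : ℕ) : ℤ) := by
      intro i
      exact_mod_cast (hKA i).trans (hKB i).symm
    -- main relation per coordinate
    have hrel : ∀ i, wQ i0 * v i = wQ i * v i0 := by
      intro i
      have hcastW : ∀ i', (∑ j, ((c j : ℤ) * ((k1 * A j i' : ℕ) : ℤ))) =
          ((∑ j, c j * (k1 * A j i') : ℕ) : ℤ) := by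
        intro i'
        push_cast
        rfl
      have hlam : ∑ i', (((∑ j, c j * (k1 * A j i0) : ℕ) : ℤ) * (if i' = i then 1 else 0) -
          ((∑ j, c j * (k1 * A j i) : ℕ) : ℤ) * (if i' = i0 then 1 else 0)) *
            (∑ j, (c j : ℤ) * ((k1 * A j i' : ℕ) : ℤ)) = 0 := by
        rw [dot_indicator]
        rw [hcastW i, hcastW i0]
        ring
      have hkey := key k k1 k2 A B c d hIC
        (fun i' => ((∑ j, c j * (k1 * A j i0) : ℕ) : ℤ) * (if i' = i then 1 else 0) -
          ((∑ j, c j * (k1 * A j i) : ℕ) : ℤ) * (if i' = i0 then 1 else 0)) hlam α β hu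
      rw [dot_indicator (fun i' => ∑ j, α j * ((k1 * A j i' : ℕ) : ℤ))] at hkey
      rw [sub_eq_zero] at hkey
      have hQ := congrArg (fun t : ℤ => (t : ℚ)) hkey
      simp only [Int.cast_mul, Int.cast_natCast] at hQ
      rw [hKA i, hKA i0] at hQ
      have hQ2 : K * (wQ i0 * v i) = K * (wQ i * v i0) := by
        rw [hwQ]
        push_cast at hQ ⊢
        linear_combination hQ
      exact mul_left_cancel₀ hKne hQ2
    have hw0 : wQ i0 ≠ 0 := by
      rw [hwQ]
      exact Nat.cast_ne_zero.mpr hi0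
    rw [Submodule.mem_span_singleton]
    refine ⟨v i0 / wQ i0, ?_⟩
    funext i
    rw [Pi.smul_apply, smul_eq_mul]
    field_simp
    linear_combination (-1 : ℚ) * hrel i
  · rw [Submodule.span_le, Set.singleton_subset_iff]
    exact Submodule.mem_inf.mpr ⟨haA, haB⟩

theorem gluing_rank_add' (hn : 1 ≤ n)
    (A : Fin p → Fin n → ℕ) (B : Fin q → Fin n → ℕ)
    (k1 k2 : ℕ) (hk1 : 0 < k1) (hk2 : 0 < k2)
    (c : Fin p → ℕ) (d : Fin q → ℕ)
    (hρnot : ((∏ j, X (Sum.inl j) ^ c j : MvPolynomial (Fin p ⊕ Fin q) k) -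
        ∏ j, X (Sum.inr j) ^ d j) ∉
      extIdealLeft k (Fin q) A + extIdealRight k (Fin p) B)
    (hIC : toricIdeal k (glueList k1 k2 A B) =
      extIdealLeft k (Fin q) A + extIdealRight k (Fin p) B +
        Ideal.span {((∏ j, X (Sum.inl j) ^ c j : MvPolynomial (Fin p ⊕ Fin q) k) -
          ∏ j, X (Sum.inr j) ^ d j)})
    (hC : rkQ (Sum.elim A B) = n) :
    rkQ A + rkQ B = n + 1 ∧ (rkQ A = n → rkQ B = 1) := by
  have hspan := inf_eq_span k k1 k2 hk1 hk2 A B c d hρnot hIC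
  have hwB := w_eq k k1 k2 A B c d hIC
  obtain ⟨i0, hi0⟩ := w_ne_zero k k1 k2 hk1 hk2 A B c d hρnot hwB
  have hwQ0 : (fun i => ((∑ j, c j * (k1 * A j i) : ℕ) : ℚ) : Fin n → ℚ) ≠ 0 := by
    intro h0
    exact hi0 (Nat.cast_injective (R := ℚ) (by simpa using congrFun h0 i0))
  have hinf : Module.finrank ℚ ↥(colSpanQ A ⊓ colSpanQ B) = 1 := by
    rw [hspan]
    exact finrank_span_singleton hwQ0
  have hsup : colSpanQ (Sum.elim A B) = colSpanQ A ⊔ colSpanQ B := by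
    have hfun : (fun j => fun i => ((Sum.elim A B j i : ℕ) : ℚ)) =
        Sum.elim (fun j => fun i => ((A j i : ℕ) : ℚ)) (fun j => fun i => ((B j i : ℕ) : ℚ)) := by
      funext j
      cases j <;> rfl
    rw [colSpanQ, colSpanQ, colSpanQ, hfun, Set.Sum.elim_range, Submodule.span_union]
  have hdim := Submodule.finrank_sup_add_finrank_inf_eq (colSpanQ A) (colSpanQ B)
  rw [hinf] at hdim
  have hC' : Module.finrank ℚ ↥(colSpanQ A ⊔ colSpanQ B) = n := by
    rw [← hsup]
    exact hC
  rw [hC'] at hdim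
  have e1 : rkQ A = Module.finrank ℚ ↥(colSpanQ A) := rfl
  have e2 : rkQ B = Module.finrank ℚ ↥(colSpanQ B) := rfl
  exact ⟨by omega, fun hA => by omega⟩

end Main

/-- If `C = k₁A ⋈ k₂B` and `rk (A|B) = n`, then `rk A + rk B = n + 1`;
in particular if moreover `rk A = n`, then `rk B = 1`. -/
theorem gluing_rank_add (k : Type*) [Field k] {n p q : ℕ} (hn : 1 ≤ n)
    (A : Fin p → Fin n → ℕ) (B : Fin q → Fin n → ℕ)
    (k1 k2 : ℕ) (hk1 : 0 < k1) (hk2 : 0 < k2)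
    (h : IsGluing k A B k1 k2) (hC : rkQ (Sum.elim A B) = n) :
    rkQ A + rkQ B = n + 1 ∧ (rkQ A = n → rkQ B = 1) := by
  obtain ⟨c, d, hρnot, hIC⟩ := h
  exact gluing_rank_add' k hn A B k1 k2 hk1 hk2 c d hρnot hIC hC
end

section
/- Let k be a field, n ≥ 1, and let A = (a_1,…,a_p), B = (b_1,…,b_q) be finite lists of vectors in ℕ^n satisfying rk(A|B) = n and rk A + rk B = n + 1, and let u ∈ ℤ^n be a gluable lattice point of A and B. Let k_1, k_2 be relatively prime positive integers and C = k_1A ⊔ k_2B. For α ∈ ℤ^p and β ∈ ℤ^q, consider the binomial w = (∏_{j : α_j > 0} x_j^{α_j})(∏_{j : β_j < 0} y_j^{−β_j}) − (∏_{j : α_j < 0} x_j^{−α_j})(∏_{j : β_j > 0} y_j^{β_j}) in R = k[x_1,…,x_p,y_1,…,y_q]. Then w ∈ I_C if and only if there exists an integer ℓ such that ∑_{j=1}^q β_j b_j = k_1 ℓ u and ∑_{j=1}^p α_j a_j = k_2 ℓ u. -/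
open MvPolynomial

section Aux

open MvPolynomial

private lemma prodXpow_eq_monomial' {k : Type*} [CommSemiring k] {n : ℕ} (m : Fin n → ℕ) :
    (∏ i, X i ^ m i : MvPolynomial (Fin n) k) =
      monomial (Finsupp.equivFunOnFinite.symm m) 1 := by
  rw [← prod_X_pow_eq_monomial]
  refine (Finset.prod_subset (Finset.subset_univ _) ?_).symm
  intro x _ hx
  have : m x = 0 := Finsupp.notMem_support_iff.mp hx
  simp [this]

private lemma prodXpow_inj' {k : Type*} [CommSemiring k] [Nontrivial k] {n : ℕ}
    {m m' : Fin n → ℕ}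
    (h : (∏ i, X i ^ m i : MvPolynomial (Fin n) k) = ∏ i, X i ^ m' i) : m = m' := by
  rw [prodXpow_eq_monomial', prodXpow_eq_monomial'] at h
  exact Finsupp.equivFunOnFinite.symm.injective (monomial_left_injective one_ne_zero h)

private lemma aux_prod' {k : Type*} [CommSemiring k] {σ : Type*} [Fintype σ] {n : ℕ}
    (M : σ → Fin n → ℕ) (e : σ → ℕ) :
    (∏ j, (∏ i, (X i : MvPolynomial (Fin n) k) ^ M j i) ^ e j) =
      ∏ i, X i ^ (∑ j, e j * M j i) := by
  simp_rw [← Finset.prod_pow, ← pow_mul]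
  rw [Finset.prod_comm]
  refine Finset.prod_congr rfl fun i _ => ?_
  rw [Finset.prod_pow_eq_pow_sum]
  congr 1
  exact Finset.sum_congr rfl fun j _ => mul_comm _ _

private lemma bridge' {p q : ℕ} (α : Fin p → ℤ) (β : Fin q → ℤ) (a : Fin p → ℕ)
    (b : Fin q → ℕ) (k1 k2 : ℕ) :
    (∑ j, (α j).toNat * (k1 * a j) + ∑ j, (-β j).toNat * (k2 * b j) =
     ∑ j, (-α j).toNat * (k1 * a j) + ∑ j, (β j).toNat * (k2 * b j)) ↔
    (k1 : ℤ) * ∑ j, α j * a j = (k2 : ℤ) * ∑ j, β j * b j := by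
  rw [← Nat.cast_inj (R := ℤ)]
  push_cast
  rw [Finset.mul_sum, Finset.mul_sum]
  have h1 : ∑ j, ((α j).toNat : ℤ) * ((k1 : ℤ) * a j) -
      ∑ j, ((-α j).toNat : ℤ) * ((k1 : ℤ) * a j) = ∑ j, (k1 : ℤ) * (α j * a j) := by
    rw [← Finset.sum_sub_distrib]
    refine Finset.sum_congr rfl fun j _ => ?_
    have hj : ((α j).toNat : ℤ) - ((-α j).toNat : ℤ) = α j := by omega
    rw [← sub_mul, hj]; ring
  have h2 : ∑ j, ((β j).toNat : ℤ) * ((k2 : ℤ) * b j) -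
      ∑ j, ((-β j).toNat : ℤ) * ((k2 : ℤ) * b j) = ∑ j, (k2 : ℤ) * (β j * b j) := by
    rw [← Finset.sum_sub_distrib]
    refine Finset.sum_congr rfl fun j _ => ?_
    have hj : ((β j).toNat : ℤ) - ((-β j).toNat : ℤ) = β j := by omega
    rw [← sub_mul, hj]; ring
  constructor <;> intro h <;> linarith

private lemma level_exists {n : ℕ} (u : Fin n → ℤ) (hgcd : Finset.univ.gcd u = 1)
    (SA SB : Fin n → ℤ) (k1 k2 : ℕ) (hk2 : 0 < k2) (hcop : Nat.Coprime k1 k2)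
    (hspan : ∃ r : ℚ, ∀ i, (SA i : ℚ) = r * u i)
    (h : ∀ i, (k1 : ℤ) * SA i = (k2 : ℤ) * SB i) :
    ∃ l : ℤ, (∀ i, SB i = (k1 : ℤ) * l * u i) ∧ (∀ i, SA i = (k2 : ℤ) * l * u i) := by
  obtain ⟨r, hr⟩ := hspan
  have hdenq : ((r.den : ℚ)) ≠ 0 := by exact_mod_cast r.den_nz
  have hnumden : (r.num : ℚ) = r * r.den := by
    exact (Rat.mul_den_eq_num r).symm
  have hnum : ∀ i, r.num * u i = SA i * r.den := by
    intro i
    have h0 : ((r.num * u i : ℤ) : ℚ) = ((SA i * r.den : ℤ) : ℚ) := by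
      push_cast
      rw [hnumden, hr i]; ring
    exact_mod_cast h0
  have hdenu : ∀ i, (r.den : ℤ) ∣ u i := by
    intro i
    have hdvd : (r.den : ℤ) ∣ r.num * u i := ⟨SA i, by rw [hnum i]; ring⟩
    refine Int.dvd_of_dvd_mul_right_of_gcd_one hdvd ?_
    simpa [Int.gcd, Nat.coprime_comm] using r.reduced
  have hden1 : ((r.den : ℤ)) ∣ 1 := hgcd ▸ Finset.dvd_gcd (fun i _ => hdenu i)
  have hden1' : r.den = 1 := by
    have : (r.den : ℤ) = 1 := Int.eq_one_of_dvd_one (by positivity) hden1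
    exact_mod_cast this
  have hr_int : (r.num : ℚ) = r := (Rat.den_eq_one_iff r).mp hden1'
  set m := r.num with hm
  have hSAm : ∀ i, SA i = m * u i := by
    intro i
    have : ((SA i : ℤ) : ℚ) = ((m * u i : ℤ) : ℚ) := by
      push_cast
      rw [hr i, ← hr_int]
    exact_mod_cast this
  have hk2m : (k2 : ℤ) ∣ m := by
    have hdv : ∀ i, (k2 : ℤ) ∣ m * u i := by
      intro i
      have hd : (k2 : ℤ) ∣ (k1 : ℤ) * (m * u i) := ⟨SB i, by rw [← hSAm i]; exact h i⟩
      refine Int.dvd_of_dvd_mul_right_of_gcd_one hd ?_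
      simpa using hcop.symm
    have hdg : (k2 : ℤ) ∣ Finset.univ.gcd (fun i => m * u i) :=
      Finset.dvd_gcd fun i _ => hdv i
    rw [Finset.gcd_mul_left, hgcd, mul_one] at hdg
    exact dvd_normalize_iff.mp hdg
  obtain ⟨l, hl⟩ := hk2m
  have hk2z : (k2 : ℤ) ≠ 0 := by exact_mod_cast hk2.ne'
  refine ⟨l, fun i => ?_, fun i => ?_⟩
  · have h1 : (k2 : ℤ) * SB i = (k2 : ℤ) * ((k1 : ℤ) * l * u i) := by
      have h2 := h i
      rw [hSAm i, hl] at h2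
      linarith
    exact mul_left_cancel₀ hk2z h1
  · rw [hSAm i, hl]; try ring

end Aux

/-- Characterization of the binomials of `I_C` for `C = k₁A ⊔ k₂B` with
`gcd(k₁,k₂) = 1`, in terms of the gluable lattice point `u` and a level `ℓ`. -/
theorem binomial_mem_toricIdeal_iff (k : Type*) [Field k] {n p q : ℕ} (hn : 1 ≤ n)
    (A : Fin p → Fin n → ℕ) (B : Fin q → Fin n → ℕ)
    (hAB : rkQ (Sum.elim A B) = n) (hrk : rkQ A + rkQ B = n + 1)
    (u : Fin n → ℤ) (hu : IsGluableLatticePoint A B u)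
    (k1 k2 : ℕ) (hk1 : 0 < k1) (hk2 : 0 < k2) (hcop : Nat.Coprime k1 k2)
    (α : Fin p → ℤ) (β : Fin q → ℤ) :
    (((∏ j, X (Sum.inl j) ^ (α j).toNat) * (∏ j, X (Sum.inr j) ^ (-β j).toNat) -
        (∏ j, X (Sum.inl j) ^ (-α j).toNat) * (∏ j, X (Sum.inr j) ^ (β j).toNat) :
        MvPolynomial (Fin p ⊕ Fin q) k) ∈ toricIdeal k (glueList k1 k2 A B)) ↔
      ∃ l : ℤ, (∀ i, ∑ j, β j * (B j i : ℤ) = (k1 : ℤ) * l * u i) ∧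
        (∀ i, ∑ j, α j * (A j i : ℤ) = (k2 : ℤ) * l * u i) := by
  classical
  have key : (((∏ j, X (Sum.inl j) ^ (α j).toNat) * (∏ j, X (Sum.inr j) ^ (-β j).toNat) -
        (∏ j, X (Sum.inl j) ^ (-α j).toNat) * (∏ j, X (Sum.inr j) ^ (β j).toNat) :
        MvPolynomial (Fin p ⊕ Fin q) k) ∈ toricIdeal k (glueList k1 k2 A B)) ↔
      ∀ i, (k1 : ℤ) * ∑ j, α j * A j i = (k2 : ℤ) * ∑ j, β j * B j i := by
    rw [toricIdeal, RingHom.mem_ker, map_sub, sub_eq_zero, map_mul, map_mul]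
    simp only [map_prod, map_pow, aeval_X]
    rw [aux_prod' (fun j => glueList k1 k2 A B (Sum.inl j)) (fun j => (α j).toNat),
      aux_prod' (fun j => glueList k1 k2 A B (Sum.inr j)) (fun j => (-β j).toNat),
      aux_prod' (fun j => glueList k1 k2 A B (Sum.inl j)) (fun j => (-α j).toNat),
      aux_prod' (fun j => glueList k1 k2 A B (Sum.inr j)) (fun j => (β j).toNat),
      ← Finset.prod_mul_distrib, ← Finset.prod_mul_distrib]
    simp_rw [← pow_add]
    constructor
    · intro h i
      have hE := congrFun (prodXpow_inj' h) i
      exact (bridge' α β (fun j => A j i) (fun j => B j i) k1 k2).mp hE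
    · intro h
      refine Finset.prod_congr rfl fun i _ => ?_
      congr 1
      exact (bridge' α β (fun j => A j i) (fun j => B j i) k1 k2).mpr (h i)
  rw [key]
  constructor
  · intro h
    have hspan : ∃ r : ℚ, ∀ i, ((∑ j, α j * (A j i : ℤ) : ℤ) : ℚ) = r * u i := by
      have hmemA : (fun i => ((∑ j, α j * (A j i : ℤ) : ℤ) : ℚ)) ∈ colSpanQ A := by
        have heq : (fun i => ((∑ j, α j * (A j i : ℤ) : ℤ) : ℚ)) =
            ∑ j, (α j : ℚ) • (fun i => (A j i : ℚ)) := by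
          funext i
          rw [Finset.sum_apply]
          push_cast
          exact Finset.sum_congr rfl fun j _ => rfl
        rw [heq]
        exact Submodule.sum_mem _ fun j _ =>
          Submodule.smul_mem _ _ (Submodule.subset_span ⟨j, rfl⟩)
      have hmemB : (fun i => ((∑ j, β j * (B j i : ℤ) : ℤ) : ℚ)) ∈ colSpanQ B := by
        have heq : (fun i => ((∑ j, β j * (B j i : ℤ) : ℤ) : ℚ)) =
            ∑ j, (β j : ℚ) • (fun i => (B j i : ℚ)) := by
          funext i
          rw [Finset.sum_apply]
          push_cast
          exact Finset.sum_congr rfl fun j _ => rfl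
        rw [heq]
        exact Submodule.sum_mem _ fun j _ =>
          Submodule.smul_mem _ _ (Submodule.subset_span ⟨j, rfl⟩)
      have hk1q : (k1 : ℚ) ≠ 0 := by exact_mod_cast hk1.ne'
      have hrel : (fun i => ((∑ j, α j * (A j i : ℤ) : ℤ) : ℚ)) =
          ((k2 : ℚ) / (k1 : ℚ)) • (fun i => ((∑ j, β j * (B j i : ℤ) : ℤ) : ℚ)) := by
        funext i
        have hi : (k1 : ℚ) * ((∑ j, α j * (A j i : ℤ) : ℤ) : ℚ) =
            (k2 : ℚ) * ((∑ j, β j * (B j i : ℤ) : ℤ) : ℚ) := by exact_mod_cast h i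
        simp only [Pi.smul_apply, smul_eq_mul]
        rw [div_mul_eq_mul_div, eq_div_iff hk1q]
        push_cast at hi ⊢
        linarith
      have hmemAB : (fun i => ((∑ j, α j * (A j i : ℤ) : ℤ) : ℚ)) ∈
          colSpanQ A ⊓ colSpanQ B :=
        ⟨hmemA, by rw [hrel]; exact Submodule.smul_mem _ _ hmemB⟩
      rw [← hu.2] at hmemAB
      obtain ⟨r, hr⟩ := Submodule.mem_span_singleton.mp hmemAB
      exact ⟨r, fun i => (congrFun hr i).symm⟩
    obtain ⟨l, hB, hA⟩ := level_exists u hu.1 (fun i => ∑ j, α j * A j i)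
      (fun i => ∑ j, β j * B j i) k1 k2 hk2 hcop hspan h
    exact ⟨l, hB, hA⟩
  · rintro ⟨l, hB, hA⟩ i
    rw [hA i, hB i]
    ring
end

section
/- Let k be a field and let A = (a_1,…,a_p) and B = (b_1,…,b_q) be lists of positive integers (the case n = 1). If k_1 ∈ ⟨B⟩ and k_2 ∈ ⟨A⟩ are positive integers with gcd(k_1,k_2) = 1, then C = k_1A ⋈ k_2B. In particular, if gcd(a_1,…,a_p) = 1 and gcd(b_1,…,b_q) = 1 (i.e., ⟨A⟩ and ⟨B⟩ are numerical semigroups), then ⟨A⟩ and ⟨B⟩ can be glued. -/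
open MvPolynomial

namespace GlueAux

variable {k : Type*} [CommRing k]

/-- The weighted monomial map `x_j ↦ X^{w j}` into `k[X]`. -/
noncomputable def Φ (k : Type*) [CommRing k] {σ : Type*} (w : σ → ℕ) :
    MvPolynomial σ k →ₐ[k] Polynomial k :=
  aeval (fun j => Polynomial.X ^ w j)

lemma Φ_comp {σ : Type*} (w : σ → ℕ) :
    (aeval (fun _ : Fin 1 => (Polynomial.X : Polynomial k)) :
        MvPolynomial (Fin 1) k →ₐ[k] Polynomial k).comp
      (aeval (fun j => ∏ i, MvPolynomial.X i ^ (fun j (_ : Fin 1) => w j) j i) :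
        MvPolynomial σ k →ₐ[k] MvPolynomial (Fin 1) k) = Φ k w := by
  apply MvPolynomial.algHom_ext
  intro j
  simp [Φ, Fin.prod_univ_one]

lemma psi_inj : Function.Injective
    (aeval (fun _ : Fin 1 => (Polynomial.X : Polynomial k)) :
      MvPolynomial (Fin 1) k →ₐ[k] Polynomial k) := by
  have h : (Polynomial.aeval (MvPolynomial.X 0 : MvPolynomial (Fin 1) k)).comp
      (aeval (fun _ : Fin 1 => (Polynomial.X : Polynomial k))) = AlgHom.id k _ := by
    apply MvPolynomial.algHom_ext
    intro i
    have hi : i = 0 := Subsingleton.elim i 0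
    subst hi
    simp
  intro f g hfg
  have h1 := AlgHom.congr_fun h f
  have h2 := AlgHom.congr_fun h g
  simp only [AlgHom.coe_comp, Function.comp_apply, AlgHom.id_apply] at h1 h2
  rw [← h1, ← h2, hfg]

lemma mem_toric_iff {σ : Type*} (w : σ → ℕ) (f : MvPolynomial σ k) :
    f ∈ toricIdeal k (fun j (_ : Fin 1) => w j) ↔ Φ k w f = 0 := by
  rw [toricIdeal, RingHom.mem_ker]
  constructor
  · intro h
    rw [← Φ_comp (k := k) w, AlgHom.comp_apply, h, map_zero]
  · intro h
    apply psi_inj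
    rw [map_zero]
    rw [← AlgHom.comp_apply, Φ_comp (k := k) w, h]


section Basic
variable {σ : Type*} [Fintype σ]

lemma Φ_prod (w u : σ → ℕ) :
    Φ k w (∏ j, MvPolynomial.X j ^ u j) = Polynomial.X ^ ∑ j, u j * w j := by
  rw [map_prod]
  simp only [map_pow, Φ, aeval_X, ← pow_mul]
  rw [Finset.prod_pow_eq_pow_sum]
  congr 1
  exact Finset.sum_congr rfl fun j _ => mul_comm _ _

lemma Φ_monomial (w : σ → ℕ) (m : σ →₀ ℕ) (c : k) :
    Φ k w (monomial m c) = Polynomial.C c * Polynomial.X ^ ∑ j, m j * w j := by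
  rw [Φ, aeval_monomial, Finsupp.prod_fintype _ _ (fun j => pow_zero _)]
  simp only [← pow_mul]
  rw [Finset.prod_pow_eq_pow_sum, Polynomial.algebraMap_eq]
  congr 2
  exact Finset.sum_congr rfl fun j _ => mul_comm _ _

lemma monomial_eq_prod (m : σ →₀ ℕ) :
    (monomial m 1 : MvPolynomial σ k) = ∏ j, MvPolynomial.X j ^ m j := by
  rw [← MvPolynomial.prod_X_pow_eq_monomial]
  exact Finset.prod_subset (Finset.subset_univ _) (fun x _ hx => by
    rw [Finsupp.notMem_support_iff.mp hx, pow_zero])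

lemma Φ_expand (w : σ → ℕ) (f : MvPolynomial σ k) :
    Φ k w f = ∑ v ∈ f.support, Polynomial.C (coeff v f) * Polynomial.X ^ ∑ j, v j * w j := by
  conv_lhs => rw [f.as_sum]
  rw [map_sum]
  exact Finset.sum_congr rfl fun v _ => Φ_monomial w v _

lemma exists_same_deg (w : σ → ℕ) (f : MvPolynomial σ k) (hf : Φ k w f = 0)
    {m : σ →₀ ℕ} (hm : m ∈ f.support) :
    ∃ m' ∈ f.support, m' ≠ m ∧ (∑ j, m' j * w j) = ∑ j, m j * w j := by
  classical
  by_contra hcon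
  push_neg at hcon
  have h0 : (Φ k w f).coeff (∑ j, m j * w j) = 0 := by rw [hf]; simp
  rw [Φ_expand, Polynomial.finset_sum_coeff] at h0
  simp only [Polynomial.coeff_C_mul, Polynomial.coeff_X_pow, mul_ite, mul_one, mul_zero] at h0
  rw [← Finset.add_sum_erase _ _ hm, if_pos rfl] at h0
  rw [Finset.sum_eq_zero (fun v hv => by
    rw [if_neg]
    intro he
    exact hcon v (Finset.mem_of_mem_erase hv) (Finset.ne_of_mem_erase hv) he.symm),
    add_zero] at h0
  exact (MvPolynomial.mem_support_iff.mp hm) h0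

lemma mem_of_ker (w : σ → ℕ) (J : Ideal (MvPolynomial σ k))
    (hbin : ∀ m m' : σ →₀ ℕ, (∑ j, m j * w j) = (∑ j, m' j * w j) →
      (monomial m 1 - monomial m' 1 : MvPolynomial σ k) ∈ J)
    (f : MvPolynomial σ k) (hf : Φ k w f = 0) : f ∈ J := by
  classical
  generalize hn : f.support.card = n
  induction n using Nat.strong_induction_on generalizing f with
  | _ n ih =>
    rcases Finset.eq_empty_or_nonempty f.support with he | ⟨m, hm⟩
    · rw [MvPolynomial.support_eq_empty.mp he]; exact J.zero_mem
    · obtain ⟨m', hm'f, hne, hdeg⟩ := exists_same_deg w f hf hm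
      set cf := coeff m f with hcf
      set bin : MvPolynomial σ k := monomial m cf - monomial m' cf with hbd
      have hbinJ : bin ∈ J := by
        have : bin = MvPolynomial.C cf * (monomial m 1 - monomial m' 1) := by
          rw [hbd, mul_sub]
          congr 1 <;> rw [MvPolynomial.C_mul_monomial, mul_one]
        rw [this]
        exact J.mul_mem_left _ (hbin m m' hdeg.symm)
      have hbin0 : Φ k w bin = 0 := by
        rw [hbd, map_sub, Φ_monomial, Φ_monomial, hdeg, sub_self]
      set g := f - bin with hg
      have hgf : Φ k w g = 0 := by rw [hg, map_sub, hf, hbin0, sub_self]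
      have hsub : g.support ⊆ f.support.erase m := by
        intro v hv
        rw [MvPolynomial.mem_support_iff] at hv
        have hcv : coeff v g = coeff v f - (if m = v then cf else 0) +
            (if m' = v then cf else 0) := by
          rw [hg, hbd]
          simp only [MvPolynomial.coeff_sub, MvPolynomial.coeff_monomial]
          ring
        rcases eq_or_ne v m with rfl | hvm
        · exfalso
          apply hv
          rw [hcv, if_pos rfl, if_neg hne, add_zero, hcf, sub_self]
        · refine Finset.mem_erase.mpr ⟨hvm, ?_⟩
          rw [MvPolynomial.mem_support_iff]
          intro hvf
          apply hv
          rw [hcv, hvf, if_neg (fun h => hvm h.symm), sub_zero, zero_add, if_neg, ]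
          intro h
          rw [← h] at hvf
          exact (MvPolynomial.mem_support_iff.mp hm'f) hvf
      have hcard : g.support.card < n := by
        calc g.support.card ≤ (f.support.erase m).card := Finset.card_le_card hsub
        _ < f.support.card := Finset.card_erase_lt_of_mem hm
        _ = n := hn
      have hgJ : g ∈ J := ih _ hcard g hgf rfl
      have : f = g + bin := by rw [hg]; ring
      rw [this]
      exact J.add_mem hgJ hbinJ
lemma binomial_mem (w u u' : σ → ℕ) (h : ∑ j, u j * w j = ∑ j, u' j * w j) :
    ((∏ j, MvPolynomial.X j ^ u j) - ∏ j, MvPolynomial.X j ^ u' j : MvPolynomial σ k) ∈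
      toricIdeal k (fun j (_ : Fin 1) => w j) := by
  rw [mem_toric_iff, map_sub, Φ_prod, Φ_prod, h, sub_self]


end Basic

section Glue

variable {p q : ℕ} (a : Fin p → ℕ) (b : Fin q → ℕ) (k1 k2 : ℕ)

/-- the weight vector of the glued list -/
def wgt : Fin p ⊕ Fin q → ℕ := Sum.elim (fun j => k1 * a j) (fun j => k2 * b j)

lemma glueList_eq :
    glueList k1 k2 (fun j (_ : Fin 1) => a j) (fun j (_ : Fin 1) => b j) =
      fun j (_ : Fin 1) => wgt a b k1 k2 j := by
  funext j i
  cases j <;> rfl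

variable (c : Fin p → ℕ) (d : Fin q → ℕ)

/-- the glued ideal -/
noncomputable def Jgl (k : Type*) [CommRing k] : Ideal (MvPolynomial (Fin p ⊕ Fin q) k) :=
  extIdealLeft k (Fin q) (fun j (_ : Fin 1) => a j) +
    extIdealRight k (Fin p) (fun j (_ : Fin 1) => b j) +
    Ideal.span {((∏ j, X (Sum.inl j) ^ c j : MvPolynomial (Fin p ⊕ Fin q) k) -
      ∏ j, X (Sum.inr j) ^ d j)}

lemma memJ_left {x : MvPolynomial (Fin p ⊕ Fin q) k}
    (hx : x ∈ extIdealLeft k (Fin q) (fun j (_ : Fin 1) => a j)) : x ∈ Jgl a b c d k := by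
  rw [Jgl, Submodule.add_eq_sup, Submodule.add_eq_sup]
  exact Submodule.mem_sup_left (Submodule.mem_sup_left hx)

lemma memJ_right {x : MvPolynomial (Fin p ⊕ Fin q) k}
    (hx : x ∈ extIdealRight k (Fin p) (fun j (_ : Fin 1) => b j)) : x ∈ Jgl a b c d k := by
  rw [Jgl, Submodule.add_eq_sup, Submodule.add_eq_sup]
  exact Submodule.mem_sup_left (Submodule.mem_sup_right hx)

lemma memJ_rho {x : MvPolynomial (Fin p ⊕ Fin q) k}
    (hx : x ∈ Ideal.span {((∏ j, X (Sum.inl j) ^ c j : MvPolynomial (Fin p ⊕ Fin q) k) -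
      ∏ j, X (Sum.inr j) ^ d j)}) : x ∈ Jgl a b c d k := by
  rw [Jgl, Submodule.add_eq_sup]
  exact Submodule.mem_sup_right hx

lemma rename_prod_pow {ι κ : Type*} [Fintype ι] (g : ι → κ) (u : ι → ℕ) :
    rename g (∏ j, MvPolynomial.X j ^ u j : MvPolynomial ι k) =
      ∏ j, MvPolynomial.X (g j) ^ u j := by
  rw [map_prod]
  simp [rename_X]

lemma wgt_split (m : Fin p ⊕ Fin q →₀ ℕ) :
    ∑ j, m j * wgt a b k1 k2 j =
      k1 * (∑ j, m (Sum.inl j) * a j) + k2 * (∑ j, m (Sum.inr j) * b j) := by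
  rw [Fintype.sum_sum_type]
  congr 1 <;> rw [Finset.mul_sum] <;>
    exact Finset.sum_congr rfl fun j _ => by simp [wgt]; ring

lemma glue_binomial_aux (hc : ∑ j, c j * a j = k2) (hd : ∑ j, d j * b j = k1)
    (hcop : Nat.Coprime k1 k2) (hk2 : 0 < k2)
    (m m' : Fin p ⊕ Fin q →₀ ℕ)
    (hdeg : ∑ j, m j * wgt a b k1 k2 j = ∑ j, m' j * wgt a b k1 k2 j)
    (hle : ∑ j, m' (Sum.inl j) * a j ≤ ∑ j, m (Sum.inl j) * a j) :
    (monomial m 1 - monomial m' 1 : MvPolynomial (Fin p ⊕ Fin q) k) ∈ Jgl a b c d k := by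
  set dAu := ∑ j, m (Sum.inl j) * a j with hdAu
  set dAu' := ∑ j, m' (Sum.inl j) * a j with hdAu'
  set dBv := ∑ j, m (Sum.inr j) * b j with hdBv
  set dBv' := ∑ j, m' (Sum.inr j) * b j with hdBv'
  have key : k1 * dAu + k2 * dBv = k1 * dAu' + k2 * dBv' := by
    rw [← wgt_split, ← wgt_split, hdeg]
  -- extract the multiplier t
  obtain ⟨D, hD⟩ := Nat.exists_eq_add_of_le hle
  have hkey2 : k1 * D + k2 * dBv = k2 * dBv' := by
    apply Nat.add_left_cancel (n := k1 * dAu')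
    calc k1 * dAu' + (k1 * D + k2 * dBv) = k1 * (dAu' + D) + k2 * dBv := by ring
    _ = k1 * dAu + k2 * dBv := by rw [← hD]
    _ = k1 * dAu' + k2 * dBv' := key
  have hble : k2 * dBv ≤ k2 * dBv' := le_trans (Nat.le_add_left _ _) hkey2.le
  have hdvd : k2 ∣ k1 * D := ⟨dBv' - dBv, by
    rw [Nat.mul_sub, ← hkey2, Nat.add_sub_cancel]⟩
  have hdvd2 : k2 ∣ D := (Nat.Coprime.dvd_of_dvd_mul_left hcop.symm hdvd)
  obtain ⟨t, ht⟩ := hdvd2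
  have hA : dAu = dAu' + k2 * t := by rw [hD, ht]
  have hB : dBv' = dBv + k1 * t := by
    have h2 : k2 * dBv' = k2 * (dBv + k1 * t) := by
      rw [← hkey2, ht]; ring
    exact Nat.eq_of_mul_eq_mul_left hk2 h2
  -- notation for the monomials
  set Mu : MvPolynomial (Fin p ⊕ Fin q) k := ∏ j, X (Sum.inl j) ^ m (Sum.inl j) with hMu
  set Nv : MvPolynomial (Fin p ⊕ Fin q) k := ∏ j, X (Sum.inr j) ^ m (Sum.inr j) with hNv
  set Mu' : MvPolynomial (Fin p ⊕ Fin q) k := ∏ j, X (Sum.inl j) ^ m' (Sum.inl j) with hMu'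
  set Nv' : MvPolynomial (Fin p ⊕ Fin q) k := ∏ j, X (Sum.inr j) ^ m' (Sum.inr j) with hNv'
  set P : MvPolynomial (Fin p ⊕ Fin q) k := ∏ j, X (Sum.inl j) ^ c j with hP
  set Q : MvPolynomial (Fin p ⊕ Fin q) k := ∏ j, X (Sum.inr j) ^ d j with hQ
  have hmonm : (monomial m 1 : MvPolynomial (Fin p ⊕ Fin q) k) = Mu * Nv := by
    rw [monomial_eq_prod, Fintype.prod_sum_type]
  have hmonm' : (monomial m' 1 : MvPolynomial (Fin p ⊕ Fin q) k) = Mu' * Nv' := by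
    rw [monomial_eq_prod, Fintype.prod_sum_type]
  -- T1
  have hT1 : Mu - Mu' * P ^ t ∈ extIdealLeft k (Fin q) (fun j (_ : Fin 1) => a j) := by
    have heq : Mu - Mu' * P ^ t = rename Sum.inl
        ((∏ j, MvPolynomial.X j ^ m (Sum.inl j)) -
          ∏ j, MvPolynomial.X j ^ (m' (Sum.inl j) + t * c j) : MvPolynomial (Fin p) k) := by
      rw [map_sub, rename_prod_pow, rename_prod_pow]
      congr 1
      rw [hMu', hP]
      rw [← Finset.prod_pow, ← Finset.prod_mul_distrib]
      exact Finset.prod_congr rfl fun j _ => by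
        rw [← pow_mul, ← pow_add, Nat.mul_comm (c j) t]
    rw [heq]
    apply Ideal.mem_map_of_mem
    apply binomial_mem
    rw [Finset.sum_congr rfl (fun j (_ : j ∈ Finset.univ) => add_mul (m' (Sum.inl j)) (t * c j) (a j)),
      Finset.sum_add_distrib]
    have : ∑ j, t * c j * a j = t * k2 := by
      rw [← hc, Finset.mul_sum]
      exact Finset.sum_congr rfl fun j _ => by ring
    rw [this, ← hdAu', ← hdAu, hA]
    ring
  -- T2
  have hT2 : P ^ t - Q ^ t ∈ Ideal.span
      {((∏ j, X (Sum.inl j) ^ c j : MvPolynomial (Fin p ⊕ Fin q) k) -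
        ∏ j, X (Sum.inr j) ^ d j)} :=
    Ideal.mem_span_singleton.mpr (sub_dvd_pow_sub_pow P Q t)
  -- T3
  have hT3 : Nv * Q ^ t - Nv' ∈ extIdealRight k (Fin p) (fun j (_ : Fin 1) => b j) := by
    have heq : Nv * Q ^ t - Nv' = rename Sum.inr
        ((∏ j, MvPolynomial.X j ^ (m (Sum.inr j) + t * d j)) -
          ∏ j, MvPolynomial.X j ^ m' (Sum.inr j) : MvPolynomial (Fin q) k) := by
      rw [map_sub, rename_prod_pow, rename_prod_pow]
      congr 1
      rw [hNv, hQ]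
      rw [← Finset.prod_pow, ← Finset.prod_mul_distrib]
      exact Finset.prod_congr rfl fun j _ => by
        rw [← pow_mul, ← pow_add, Nat.mul_comm (d j) t]
    rw [heq]
    apply Ideal.mem_map_of_mem
    apply binomial_mem
    rw [Finset.sum_congr rfl (fun j (_ : j ∈ Finset.univ) => add_mul (m (Sum.inr j)) (t * d j) (b j)),
      Finset.sum_add_distrib]
    have : ∑ j, t * d j * b j = t * k1 := by
      rw [← hd, Finset.mul_sum]
      exact Finset.sum_congr rfl fun j _ => by ring
    rw [this, ← hdBv, ← hdBv', hB]
    ring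
  have hsum : (monomial m 1 - monomial m' 1 : MvPolynomial (Fin p ⊕ Fin q) k) =
      Nv * (Mu - Mu' * P ^ t) + (Mu' * Nv) * (P ^ t - Q ^ t) + Mu' * (Nv * Q ^ t - Nv') := by
    rw [hmonm, hmonm']; ring
  rw [hsum]
  exact add_mem (add_mem
      (memJ_left a b c d (Ideal.mul_mem_left _ _ hT1))
      (memJ_rho a b c d (Ideal.mul_mem_left _ _ hT2)))
    (memJ_right a b c d (Ideal.mul_mem_left _ _ hT3))

lemma glue_binomial (hc : ∑ j, c j * a j = k2) (hd : ∑ j, d j * b j = k1)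
    (hcop : Nat.Coprime k1 k2) (hk2 : 0 < k2)
    (m m' : Fin p ⊕ Fin q →₀ ℕ)
    (hdeg : ∑ j, m j * wgt a b k1 k2 j = ∑ j, m' j * wgt a b k1 k2 j) :
    (monomial m 1 - monomial m' 1 : MvPolynomial (Fin p ⊕ Fin q) k) ∈ Jgl a b c d k := by
  rcases le_total (∑ j, m' (Sum.inl j) * a j) (∑ j, m (Sum.inl j) * a j) with hle | hle
  · exact glue_binomial_aux a b k1 k2 c d hc hd hcop hk2 m m' hdeg hle
  · have : (monomial m 1 - monomial m' 1 : MvPolynomial (Fin p ⊕ Fin q) k) =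
        -(monomial m' 1 - monomial m 1) := by ring
    rw [this]
    exact neg_mem (glue_binomial_aux a b k1 k2 c d hc hd hcop hk2 m' m hdeg.symm hle)

lemma J_le_toric (hc : ∑ j, c j * a j = k2) (hd : ∑ j, d j * b j = k1) :
    Jgl a b c d k ≤
      toricIdeal k (glueList k1 k2 (fun j (_ : Fin 1) => a j) (fun j (_ : Fin 1) => b j)) := by
  rw [glueList_eq]
  rw [Jgl, Submodule.add_eq_sup, Submodule.add_eq_sup]
  apply sup_le (sup_le ?_ ?_) ?_
  · rw [extIdealLeft, Ideal.map_le_iff_le_comap]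
    intro f hf
    rw [Ideal.mem_comap, mem_toric_iff]
    have hcomp : (Polynomial.aeval ((Polynomial.X : Polynomial k) ^ k1)).comp (Φ k a) =
        aeval (fun j => (Polynomial.X : Polynomial k) ^ (k1 * a j)) := by
      apply MvPolynomial.algHom_ext
      intro j
      simp [Φ, pow_mul]
    have : Φ k (wgt a b k1 k2) (rename Sum.inl f) =
        aeval (fun j => (Polynomial.X : Polynomial k) ^ (k1 * a j)) f := by
      rw [Φ, aeval_rename]
      rfl
    rw [this, ← hcomp, AlgHom.comp_apply, (mem_toric_iff a f).mp hf, map_zero]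
  · rw [extIdealRight, Ideal.map_le_iff_le_comap]
    intro f hf
    rw [Ideal.mem_comap, mem_toric_iff]
    have hcomp : (Polynomial.aeval ((Polynomial.X : Polynomial k) ^ k2)).comp (Φ k b) =
        aeval (fun j => (Polynomial.X : Polynomial k) ^ (k2 * b j)) := by
      apply MvPolynomial.algHom_ext
      intro j
      simp [Φ, pow_mul]
    have : Φ k (wgt a b k1 k2) (rename Sum.inr f) =
        aeval (fun j => (Polynomial.X : Polynomial k) ^ (k2 * b j)) f := by
      rw [Φ, aeval_rename]
      rfl
    rw [this, ← hcomp, AlgHom.comp_apply, (mem_toric_iff b f).mp hf, map_zero]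
  · rw [Ideal.span_le, Set.singleton_subset_iff, SetLike.mem_coe, mem_toric_iff, map_sub]
    have h1 : Φ k (wgt a b k1 k2) (∏ j, X (Sum.inl j) ^ c j) = Polynomial.X ^ (k1 * k2) := by
      rw [← rename_prod_pow, Φ, aeval_rename]
      have : Φ k (fun j => k1 * a j) (∏ j, MvPolynomial.X j ^ c j) =
          Polynomial.X ^ ∑ j, c j * (k1 * a j) := Φ_prod _ _
      rw [Φ] at this
      rw [show ((fun j => Polynomial.X ^ wgt a b k1 k2 j) ∘ Sum.inl) =
        (fun j => (Polynomial.X : Polynomial k) ^ (k1 * a j)) from rfl, this]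
      congr 1
      rw [← hc, Finset.mul_sum]
      exact Finset.sum_congr rfl fun j _ => by ring
    have h2 : Φ k (wgt a b k1 k2) (∏ j, X (Sum.inr j) ^ d j) = Polynomial.X ^ (k1 * k2) := by
      rw [← rename_prod_pow, Φ, aeval_rename]
      have : Φ k (fun j => k2 * b j) (∏ j, MvPolynomial.X j ^ d j) =
          Polynomial.X ^ ∑ j, d j * (k2 * b j) := Φ_prod _ _
      rw [Φ] at this
      rw [show ((fun j => Polynomial.X ^ wgt a b k1 k2 j) ∘ Sum.inr) =
        (fun j => (Polynomial.X : Polynomial k) ^ (k2 * b j)) from rfl, this]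
      congr 1
      rw [← hd, Finset.sum_mul]
      exact Finset.sum_congr rfl fun j _ => by ring
    rw [h1, h2, sub_self]

lemma toric_le_J (hc : ∑ j, c j * a j = k2) (hd : ∑ j, d j * b j = k1)
    (hcop : Nat.Coprime k1 k2) (hk2 : 0 < k2) :
    toricIdeal k (glueList k1 k2 (fun j (_ : Fin 1) => a j) (fun j (_ : Fin 1) => b j)) ≤
      Jgl a b c d k := by
  rw [glueList_eq]
  intro f hf
  rw [mem_toric_iff] at hf
  exact mem_of_ker _ _ (glue_binomial a b k1 k2 c d hc hd hcop hk2) f hf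

lemma rho_not_mem [Nontrivial k] (hc : ∑ j, c j * a j = k2) (hk2 : 0 < k2) :
    ((∏ j, X (Sum.inl j) ^ c j : MvPolynomial (Fin p ⊕ Fin q) k) -
        ∏ j, X (Sum.inr j) ^ d j) ∉
      extIdealLeft k (Fin q) (fun j (_ : Fin 1) => a j) +
        extIdealRight k (Fin p) (fun j (_ : Fin 1) => b j) := by
  set β : MvPolynomial (Fin p ⊕ Fin q) k →ₐ[k] Polynomial k :=
    aeval (Sum.elim (fun j => (Polynomial.X : Polynomial k) ^ a j) (fun _ => 1)) with hβ
  have hL : extIdealLeft k (Fin q) (fun j (_ : Fin 1) => a j) ≤ RingHom.ker β := by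
    rw [extIdealLeft, Ideal.map_le_iff_le_comap]
    intro f hf
    rw [Ideal.mem_comap, RingHom.mem_ker, hβ, aeval_rename]
    exact (mem_toric_iff a f).mp hf
  have hR : extIdealRight k (Fin p) (fun j (_ : Fin 1) => b j) ≤ RingHom.ker β := by
    rw [extIdealRight, Ideal.map_le_iff_le_comap]
    intro f hf
    rw [Ideal.mem_comap, RingHom.mem_ker, hβ, aeval_rename]
    have hcomp : (Polynomial.aeval (1 : Polynomial k)).comp (Φ k b) =
        aeval ((Sum.elim (fun j => (Polynomial.X : Polynomial k) ^ a j) (fun _ => 1)) ∘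
          Sum.inr) := by
      apply MvPolynomial.algHom_ext
      intro j
      simp [Φ]
    rw [← hcomp, AlgHom.comp_apply, (mem_toric_iff b f).mp hf, map_zero]
  intro hmem
  rw [Submodule.add_eq_sup, Submodule.mem_sup] at hmem
  obtain ⟨x, hx, y, hy, hxy⟩ := hmem
  have hz : β ((∏ j, X (Sum.inl j) ^ c j : MvPolynomial (Fin p ⊕ Fin q) k) -
      ∏ j, X (Sum.inr j) ^ d j) = 0 := by
    rw [← hxy, map_add, RingHom.mem_ker.mp (hL hx), RingHom.mem_ker.mp (hR hy), add_zero]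
  have hval : β ((∏ j, X (Sum.inl j) ^ c j : MvPolynomial (Fin p ⊕ Fin q) k) -
      ∏ j, X (Sum.inr j) ^ d j) = Polynomial.X ^ k2 - 1 := by
    rw [map_sub]
    congr 1
    · rw [map_prod]
      simp only [map_pow, hβ, aeval_X, Sum.elim_inl, ← pow_mul]
      rw [Finset.prod_pow_eq_pow_sum]
      rw [← hc]
      congr 1
      exact Finset.sum_congr rfl fun j _ => by ring
    · rw [map_prod]
      simp [hβ]
  rw [hval] at hz
  have hco := congrArg (fun P => Polynomial.coeff P 0) hz
  simp [Polynomial.coeff_X_pow, hk2.ne] at hco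


end Glue

lemma bezout {σ : Type*} [DecidableEq σ] (a : σ → ℕ) (s : Finset σ) :
    ∃ z : σ → ℤ, ∑ j ∈ s, z j * a j = ((s.gcd a : ℕ) : ℤ) := by
  induction s using Finset.induction with
  | empty => exact ⟨0, by simp⟩
  | insert i s hi ih =>
    obtain ⟨z, hz⟩ := ih
    refine ⟨fun j => if j = i then Nat.gcdA (a i) (s.gcd a) else Nat.gcdB (a i) (s.gcd a) * z j,
      ?_⟩
    rw [Finset.sum_insert hi]
    simp only []
    rw [if_pos trivial]
    rw [Finset.sum_congr rfl (fun j hj => by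
      rw [if_neg (ne_of_mem_of_not_mem hj hi)])]
    have hsum : ∑ j ∈ s, Nat.gcdB (a i) (s.gcd a) * z j * a j =
        Nat.gcdB (a i) (s.gcd a) * (((s.gcd a : ℕ)) : ℤ) := by
      rw [← hz, Finset.mul_sum]
      exact Finset.sum_congr rfl fun j _ => by ring
    rw [hsum]
    have hins : (insert i s).gcd a = Nat.gcd (a i) (s.gcd a) := Finset.gcd_insert
    rw [hins]
    have hgcd := Nat.gcd_eq_gcd_ab (a i) (s.gcd a)
    rw [hgcd]
    ring

lemma rep_of_mem_closure {p : ℕ} {a : Fin p → ℕ} {x : ℕ}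
    (hx : x ∈ AddSubmonoid.closure (Set.range a)) : ∃ c : Fin p → ℕ, ∑ j, c j * a j = x := by
  induction hx using AddSubmonoid.closure_induction with
  | mem y hy =>
    obtain ⟨j, rfl⟩ := hy
    exact ⟨fun i => if i = j then 1 else 0, by simp [ite_mul, Finset.sum_ite_eq']⟩
  | zero => exact ⟨0, by simp⟩
  | add x y hx hy ihx ihy =>
    obtain ⟨cx, hcx⟩ := ihx
    obtain ⟨cy, hcy⟩ := ihy
    exact ⟨cx + cy, by simp [add_mul, Finset.sum_add_distrib, hcx, hcy]⟩

lemma mem_closure_of_rep {p : ℕ} (a : Fin p → ℕ) (c : Fin p → ℕ) :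
    ∑ j, c j * a j ∈ AddSubmonoid.closure (Set.range a) := by
  refine sum_mem fun j _ => ?_
  have h := AddSubmonoid.nsmul_mem (AddSubmonoid.closure (Set.range a)) (AddSubmonoid.subset_closure (Set.mem_range_self j)) (c j)
  rwa [smul_eq_mul] at h

lemma exists_coprime_elt {p : ℕ} (a : Fin p → ℕ) (ha : ∀ j, 0 < a j)
    (hgcd : Finset.univ.gcd a = 1) (k1 : ℕ) (hk1 : 0 < k1) :
    ∃ k2 : ℕ, 0 < k2 ∧ k2 ∈ AddSubmonoid.closure (Set.range a) ∧ Nat.Coprime k1 k2 := by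
  have hp : p ≠ 0 := by
    rintro rfl
    rw [Finset.univ_eq_empty, Finset.gcd_empty] at hgcd
    exact absurd hgcd (by norm_num)
  obtain ⟨z, hz⟩ := bezout a Finset.univ
  rw [hgcd] at hz
  push_cast at hz
  set c : Fin p → ℕ := fun j => (z j % (k1 : ℤ)).toNat with hcdef
  set x := ∑ j, c j * a j with hxdef
  have hmodeq : (x : ℤ) % k1 = 1 % k1 := by
    have hcz : ∀ j, (c j : ℤ) = z j % k1 :=
      fun j => Int.toNat_of_nonneg (Int.emod_nonneg _ (by exact_mod_cast hk1.ne'))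
    have h1 : (x : ℤ) = ∑ j, (c j : ℤ) * a j := by
      rw [hxdef]
      push_cast
      rfl
    rw [h1, ← hz, Finset.sum_int_mod, Finset.sum_int_mod (f := fun j => z j * a j)]
    congr 1
    refine Finset.sum_congr rfl fun j _ => ?_
    rw [hcz j, Int.mul_emod, Int.emod_emod_of_dvd _ dvd_rfl, ← Int.mul_emod]
  set j1 : Fin p := ⟨0, Nat.pos_of_ne_zero hp⟩
  set m := x + k1 * a j1 with hmdef
  have hm1 : 1 ≤ m := by
    have := Nat.mul_le_mul hk1 (ha j1)
    omega
  have hmmod : (m : ℤ) % k1 = 1 % k1 := by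
    rw [hmdef]
    push_cast
    rw [Int.add_mul_emod_self_left]
    exact hmodeq
  have hdvd : (k1 : ℤ) ∣ (m : ℤ) - 1 := by
    rw [Int.dvd_iff_emod_eq_zero, Int.sub_emod, hmmod, sub_self, Int.zero_emod]
  obtain ⟨t, ht⟩ : ∃ t : ℕ, m = 1 + k1 * t := by
    obtain ⟨t, ht⟩ := hdvd
    refine ⟨t.toNat, ?_⟩
    have htnn : 0 ≤ t := by
      rcases le_or_gt 0 t with h | h
      · exact h
      · nlinarith [Int.natCast_pos.mpr hk1, (by exact_mod_cast hm1 : (1:ℤ) ≤ m)]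
    have : (m : ℤ) = 1 + k1 * t := by omega
    have h2 : (m : ℤ) = ((1 + k1 * t.toNat : ℕ) : ℤ) := by
      push_cast [Int.toNat_of_nonneg htnn]
      omega
    exact_mod_cast h2
  refine ⟨m, hm1, ?_, ?_⟩
  · rw [hmdef, hxdef]
    apply AddSubmonoid.add_mem
    · exact mem_closure_of_rep a c
    · have h := AddSubmonoid.nsmul_mem (AddSubmonoid.closure (Set.range a))
        (AddSubmonoid.subset_closure (Set.mem_range_self j1)) k1
      rwa [smul_eq_mul] at h
  · rw [ht]
    exact (Nat.coprime_add_mul_left_right k1 1 t).mpr (Nat.coprime_one_right k1)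


end GlueAux

/-- For lists of positive integers (`n = 1`): if `k₁ ∈ ⟨B⟩` and
`k₂ ∈ ⟨A⟩` are positive and coprime, then `C = k₁A ⋈ k₂B`; in particular any two
numerical semigroups can be glued. -/
theorem numerical_semigroups_glue (k : Type*) [Field k] {p q : ℕ}
    (a : Fin p → ℕ) (b : Fin q → ℕ) (ha : ∀ j, 0 < a j) (hb : ∀ j, 0 < b j) :
    (∀ k1 k2 : ℕ, 0 < k1 → 0 < k2 →
        k1 ∈ AddSubmonoid.closure (Set.range b) →
        k2 ∈ AddSubmonoid.closure (Set.range a) →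
        Nat.Coprime k1 k2 →
        IsGluing k (fun j (_ : Fin 1) => a j) (fun j (_ : Fin 1) => b j) k1 k2) ∧
      (Finset.univ.gcd a = 1 → Finset.univ.gcd b = 1 →
        CanBeGlued k (fun j (_ : Fin 1) => a j) (fun j (_ : Fin 1) => b j)) := by
  have main : ∀ k1 k2 : ℕ, 0 < k1 → 0 < k2 →
      k1 ∈ AddSubmonoid.closure (Set.range b) →
      k2 ∈ AddSubmonoid.closure (Set.range a) →
      Nat.Coprime k1 k2 →
      IsGluing k (fun j (_ : Fin 1) => a j) (fun j (_ : Fin 1) => b j) k1 k2 := by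
    intro k1 k2 hk1 hk2 hk1B hk2A hcop
    obtain ⟨c, hc⟩ := GlueAux.rep_of_mem_closure hk2A
    obtain ⟨d, hd⟩ := GlueAux.rep_of_mem_closure hk1B
    refine ⟨c, d, ?_, ?_⟩
    · exact GlueAux.rho_not_mem (a := a) (b := b) (k2 := k2) (c := c) (d := d) hc hk2
    · have heq := le_antisymm (GlueAux.toric_le_J (k := k) a b k1 k2 c d hc hd hcop hk2)
        (GlueAux.J_le_toric (k := k) a b k1 k2 c d hc hd)
      exact heq
  refine ⟨main, ?_⟩
  intro hga hgb
  have hq : q ≠ 0 := by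
    rintro rfl
    rw [Finset.univ_eq_empty, Finset.gcd_empty] at hgb
    exact absurd hgb (by norm_num)
  set j0 : Fin q := ⟨0, Nat.pos_of_ne_zero hq⟩
  obtain ⟨k2, hk2pos, hk2mem, hcop⟩ := GlueAux.exists_coprime_elt a ha hga (b j0) (hb j0)
  have hk1mem : b j0 ∈ AddSubmonoid.closure (Set.range b) :=
    AddSubmonoid.subset_closure (Set.mem_range_self j0)
  exact ⟨b j0, k2, hb j0, hk2pos, main _ _ (hb j0) hk2pos hk1mem hk2mem hcop⟩
end

section
/- Let k be a field, n ≥ 1, and let A = (a_1,…,a_p) and B = (b_1,…,b_q) be finite lists of vectors in ℕ^n such that rk(A|B) = rk A + rk B (equivalently, the ℚ-spans of the columns of A and of B intersect only in 0). Then for all positive integers k_1, k_2, the toric ideal of C = k_1A ⊔ k_2B splits: I_C = I_A·R + I_B·R. -/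
open MvPolynomial

section ToricSplitAux

section aux
variable {k : Type*} [CommRing k] {n : ℕ} {σ : Type*} [Fintype σ]

noncomputable def wvec (D : σ → Fin n → ℕ) (m : σ →₀ ℕ) : Fin n →₀ ℕ :=
  Finsupp.equivFunOnFinite.symm (fun i => ∑ j, m j * D j i)

lemma wvec_apply (D : σ → Fin n → ℕ) (m : σ →₀ ℕ) (i : Fin n) :
    wvec D m i = ∑ j, m j * D j i := rfl

lemma aeval_toric_monomial (D : σ → Fin n → ℕ) (m : σ →₀ ℕ) (c : k) :
    aeval (R := k) (fun j => ∏ i, X i ^ D j i) (monomial m c) = monomial (wvec D m) c := by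
  rw [aeval_monomial, monomial_eq]
  rw [Finsupp.prod_fintype _ _ (fun j => pow_zero _),
      Finsupp.prod_fintype _ _ (fun i => pow_zero _)]
  congr 1
  simp_rw [← Finset.prod_pow, ← pow_mul]
  rw [Finset.prod_comm]
  refine Finset.prod_congr rfl fun i _ => ?_
  rw [Finset.prod_pow_eq_pow_sum, wvec_apply]
  congr 1
  exact Finset.sum_congr rfl fun j _ => (mul_comm _ _)

lemma binomial_mem_ker (D : σ → Fin n → ℕ) {m m' : σ →₀ ℕ}
    (h : wvec D m = wvec D m') :
    monomial m (1:k) - monomial m' 1 ∈ toricIdeal k D := by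
  simp only [toricIdeal, RingHom.mem_ker, RingHom.coe_coe, map_sub,
    aeval_toric_monomial, h, sub_self]

lemma coeff_aeval_toric [DecidableEq (σ →₀ ℕ)] (D : σ → Fin n → ℕ)
    (f : MvPolynomial σ k) (w : Fin n →₀ ℕ) :
    coeff w (aeval (R := k) (fun j => ∏ i, X i ^ D j i) f)
      = ∑ m ∈ f.support, if wvec D m = w then coeff m f else 0 := by
  conv_lhs => rw [f.as_sum]
  rw [map_sum, coeff_sum]
  simp_rw [aeval_toric_monomial, coeff_monomial]
end aux


lemma inf_eq_bot_of_rk {n p q : ℕ} (A : Fin p → Fin n → ℕ) (B : Fin q → Fin n → ℕ)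
    (h : rkQ (Sum.elim A B) = rkQ A + rkQ B) : colSpanQ A ⊓ colSpanQ B = ⊥ := by
  have hsup : colSpanQ (Sum.elim A B) = colSpanQ A ⊔ colSpanQ B := by
    rw [colSpanQ, colSpanQ, colSpanQ, ← Submodule.span_union]
    congr 1
    have he : (fun (j : Fin p ⊕ Fin q) => fun i => ((Sum.elim A B) j i : ℚ))
        = Sum.elim (fun j i => (A j i : ℚ)) (fun j i => (B j i : ℚ)) := by
      funext j
      cases j <;> rfl
    rw [he, Set.Sum.elim_range]
  have h2 := Submodule.finrank_sup_add_finrank_inf_eq (colSpanQ A) (colSpanQ B)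
  rw [← hsup] at h2
  rw [rkQ, rkQ, rkQ] at h
  have h0 : Module.finrank ℚ ↥(colSpanQ A ⊓ colSpanQ B) = 0 := by omega
  exact Submodule.finrank_eq_zero.mp h0

lemma colcomb_mem {n : ℕ} {σ : Type*} [Fintype σ] (A : σ → Fin n → ℕ) (m : σ → ℕ) :
    (fun i => ((∑ j, m j * A j i : ℕ) : ℚ)) ∈ colSpanQ A := by
  have he : (fun i => ((∑ j, m j * A j i : ℕ) : ℚ))
      = ∑ j, (m j : ℚ) • (fun i => (A j i : ℚ)) := by
    funext i
    push_cast
    simp [Finset.sum_apply]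
  rw [he]
  exact Submodule.sum_mem _ fun j _ =>
    Submodule.smul_mem _ _ (Submodule.subset_span ⟨j, rfl⟩)

lemma cancel_lemma {n : ℕ} {σ τ : Type*} [Fintype σ] [Fintype τ]
    (A : σ → Fin n → ℕ) (B : τ → Fin n → ℕ)
    (hbot : colSpanQ A ⊓ colSpanQ B = ⊥)
    {k1 k2 : ℕ} (hk1 : 0 < k1) (hk2 : 0 < k2)
    (mL mL' : σ → ℕ) (mR mR' : τ → ℕ)
    (heq : ∀ i, k1 * (∑ j, mL j * A j i) + k2 * (∑ j, mR j * B j i)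
         = k1 * (∑ j, mL' j * A j i) + k2 * (∑ j, mR' j * B j i)) :
    (∀ i, ∑ j, mL j * A j i = ∑ j, mL' j * A j i) ∧
    (∀ i, ∑ j, mR j * B j i = ∑ j, mR' j * B j i) := by
  set a : Fin n → ℚ := fun i => ((∑ j, mL j * A j i : ℕ) : ℚ) with ha
  set a' : Fin n → ℚ := fun i => ((∑ j, mL' j * A j i : ℕ) : ℚ) with ha'
  set b : Fin n → ℚ := fun i => ((∑ j, mR j * B j i : ℕ) : ℚ) with hb
  set b' : Fin n → ℚ := fun i => ((∑ j, mR' j * B j i : ℕ) : ℚ) with hb'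
  have heqQ : ∀ i, (k1 : ℚ) * a i + k2 * b i = k1 * a' i + k2 * b' i := by
    intro i
    have := heq i
    simp only [ha, ha', hb, hb']
    exact_mod_cast this
  set v : Fin n → ℚ := (k1 : ℚ) • (a - a') with hv
  have hv1 : v ∈ colSpanQ A :=
    Submodule.smul_mem _ _ (Submodule.sub_mem _ (colcomb_mem A mL) (colcomb_mem A mL'))
  have hveq : v = (k2 : ℚ) • (b' - b) := by
    funext i
    have := heqQ i
    simp only [hv, Pi.smul_apply, Pi.sub_apply, smul_eq_mul]
    linarith
  have hv2 : v ∈ colSpanQ B := by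
    rw [hveq]
    exact Submodule.smul_mem _ _ (Submodule.sub_mem _ (colcomb_mem B mR') (colcomb_mem B mR))
  have hv0 : v = 0 := by
    have : v ∈ colSpanQ A ⊓ colSpanQ B := Submodule.mem_inf.mpr ⟨hv1, hv2⟩
    rw [hbot] at this
    simpa using this
  have haeq : ∀ i, a i = a' i := by
    intro i
    have := congrFun hv0 i
    simp only [hv, Pi.smul_apply, Pi.sub_apply, smul_eq_mul, Pi.zero_apply] at this
    have hk1' : (k1 : ℚ) ≠ 0 := Nat.cast_ne_zero.mpr hk1.ne'
    have := mul_eq_zero.mp this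
    rcases this with h | h
    · exact absurd h hk1'
    · linarith [sub_eq_zero.mp h]
  have haeqN : ∀ i, (∑ j, mL j * A j i) = ∑ j, mL' j * A j i := by
    intro i
    have h := haeq i
    simp only [ha, ha'] at h
    exact_mod_cast h
  refine ⟨haeqN, ?_⟩
  · intro i
    have h1 := haeqN i
    have := heq i
    rw [h1] at this
    exact Nat.eq_of_mul_eq_mul_left hk2 (Nat.add_left_cancel this)


lemma wvec_eq_iff {n : ℕ} {σ : Type*} [Fintype σ]
    (D : σ → Fin n → ℕ) (m m' : σ →₀ ℕ) :
    wvec D m = wvec D m' ↔ ∀ i, (∑ j, m j * D j i) = ∑ j, m' j * D j i := by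
  constructor
  · intro h i
    have := congrArg (fun w => Finsupp.equivFunOnFinite w i) h
    simpa [wvec] using this
  · intro h
    unfold wvec
    congr 1
    funext i
    exact h i

section glue
variable {k : Type*} [CommRing k] {n : ℕ} {σ τ : Type*} [Fintype σ] [Fintype τ]

/-- restriction of a finsupp on `σ ⊕ τ` to `σ`. -/
noncomputable def resL (m : (σ ⊕ τ) →₀ ℕ) : σ →₀ ℕ :=
  Finsupp.equivFunOnFinite.symm (fun j => m (Sum.inl j))

noncomputable def resR (m : (σ ⊕ τ) →₀ ℕ) : τ →₀ ℕ :=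
  Finsupp.equivFunOnFinite.symm (fun j => m (Sum.inr j))

lemma res_add (m : (σ ⊕ τ) →₀ ℕ) :
    (resL m).mapDomain Sum.inl + (resR m).mapDomain Sum.inr = m := by
  ext j
  cases j with
  | inl a =>
    simp [Finsupp.mapDomain_apply Sum.inl_injective,
      Finsupp.mapDomain_notin_range, resL, resR]
  | inr a =>
    simp [Finsupp.mapDomain_apply Sum.inr_injective,
      Finsupp.mapDomain_notin_range, resL, resR]

lemma wvec_glue (k1 k2 : ℕ) (A : σ → Fin n → ℕ) (B : τ → Fin n → ℕ)
    (m : (σ ⊕ τ) →₀ ℕ) (i : Fin n) :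
    wvec (glueList k1 k2 A B) m i
      = k1 * (∑ j, resL m j * A j i) + k2 * (∑ j, resR m j * B j i) := by
  rw [wvec_apply, Fintype.sum_sum_type]
  simp only [glueList, Sum.elim_inl, Sum.elim_inr, Finset.mul_sum]
  congr 1
  · exact Finset.sum_congr rfl fun j _ => by simp [resL]; ring
  · exact Finset.sum_congr rfl fun j _ => by simp [resR]; ring
end glue


section glue2
variable {k : Type*} [CommRing k] {n : ℕ} {σ τ : Type*} [Fintype σ] [Fintype τ]
lemma binomial_split (A : σ → Fin n → ℕ) (B : τ → Fin n → ℕ)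
    (hbot : colSpanQ A ⊓ colSpanQ B = ⊥)
    {k1 k2 : ℕ} (hk1 : 0 < k1) (hk2 : 0 < k2)
    {m m' : (σ ⊕ τ) →₀ ℕ}
    (h : wvec (glueList k1 k2 A B) m = wvec (glueList k1 k2 A B) m') :
    monomial m (1:k) - monomial m' 1 ∈ extIdealLeft k τ A + extIdealRight k σ B := by
  have heq : ∀ i, k1 * (∑ j, resL m j * A j i) + k2 * (∑ j, resR m j * B j i)
      = k1 * (∑ j, resL m' j * A j i) + k2 * (∑ j, resR m' j * B j i) := by
    intro i
    rw [← wvec_glue k1 k2 A B m i, ← wvec_glue k1 k2 A B m' i, h]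
  obtain ⟨hA, hB⟩ := cancel_lemma A B hbot hk1 hk2 _ _ _ _ heq
  have hwA : wvec A (resL m) = wvec A (resL m') := (wvec_eq_iff A _ _).mpr hA
  have hwB : wvec B (resR m) = wvec B (resR m') := (wvec_eq_iff B _ _).mpr hB
  have hbinA : monomial (resL m) (1:k) - monomial (resL m') 1 ∈ toricIdeal k A :=
    binomial_mem_ker A hwA
  have hbinB : monomial (resR m) (1:k) - monomial (resR m') 1 ∈ toricIdeal k B :=
    binomial_mem_ker B hwB
  have hmemA : (monomial ((resL m).mapDomain Sum.inl) (1:k)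
      - monomial ((resL m').mapDomain Sum.inl) 1) ∈ extIdealLeft k τ A := by
    have := Ideal.mem_map_of_mem (MvPolynomial.rename (Sum.inl : σ → σ ⊕ τ)) hbinA
    simpa [map_sub, rename_monomial, extIdealLeft] using this
  have hmemB : (monomial ((resR m).mapDomain Sum.inr) (1:k)
      - monomial ((resR m').mapDomain Sum.inr) 1) ∈ extIdealRight k σ B := by
    have := Ideal.mem_map_of_mem (MvPolynomial.rename (Sum.inr : τ → σ ⊕ τ)) hbinB
    simpa [map_sub, rename_monomial, extIdealRight] using this
  set J := extIdealLeft k τ A + extIdealRight k σ B with hJ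
  have hJl : extIdealLeft k τ A ≤ J := by rw [hJ, Submodule.add_eq_sup]; exact le_sup_left
  have hJr : extIdealRight k σ B ≤ J := by rw [hJ, Submodule.add_eq_sup]; exact le_sup_right
  have key : monomial m (1:k) - monomial m' 1
      = monomial ((resR m).mapDomain Sum.inr) 1 *
          (monomial ((resL m).mapDomain Sum.inl) 1 - monomial ((resL m').mapDomain Sum.inl) 1)
        + monomial ((resL m').mapDomain Sum.inl) 1 *
          (monomial ((resR m).mapDomain Sum.inr) 1 - monomial ((resR m').mapDomain Sum.inr) 1) := by
    rw [mul_sub, mul_sub, monomial_mul, monomial_mul, monomial_mul, monomial_mul]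
    rw [show (resR m).mapDomain Sum.inr + (resL m).mapDomain Sum.inl = m by
          rw [add_comm]; exact res_add m,
        show (resL m').mapDomain Sum.inl + (resR m').mapDomain Sum.inr = m' from res_add m',
        show (resR m).mapDomain Sum.inr + (resL m').mapDomain Sum.inl
            = (resL m').mapDomain Sum.inl + (resR m).mapDomain Sum.inr from add_comm _ _]
    ring
  rw [key]
  exact J.add_mem (J.mul_mem_left _ (hJl hmemA)) (J.mul_mem_left _ (hJr hmemB))
end glue2


section rev
variable (k : Type*) [CommRing k] {n : ℕ} {σ τ : Type*}

lemma extLeft_le_ker [Fintype σ] [Fintype τ] (A : σ → Fin n → ℕ) (B : τ → Fin n → ℕ)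
    (k1 k2 : ℕ) :
    extIdealLeft k τ A ≤ toricIdeal k (glueList k1 k2 A B) := by
  rw [extIdealLeft, Ideal.map_le_iff_le_comap]
  intro f hf
  have key : (aeval (R := k) (fun j => ∏ i, X i ^ glueList k1 k2 A B j i) :
        MvPolynomial (σ ⊕ τ) k →ₐ[k] _).comp (rename (Sum.inl : σ → σ ⊕ τ))
      = (aeval (R := k) (fun i : Fin n => (X i : MvPolynomial (Fin n) k) ^ k1)).comp
          (aeval (fun j => ∏ i, X i ^ A j i)) := by
    apply algHom_ext
    intro j
    simp [glueList, pow_mul]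
  simp only [toricIdeal, Ideal.mem_comap, RingHom.mem_ker, RingHom.coe_coe] at hf ⊢
  have := congrArg (fun φ => φ f) key
  simp only [AlgHom.comp_apply] at this
  rw [this, hf, map_zero]

lemma extRight_le_ker [Fintype σ] [Fintype τ] (A : σ → Fin n → ℕ) (B : τ → Fin n → ℕ)
    (k1 k2 : ℕ) :
    extIdealRight k σ B ≤ toricIdeal k (glueList k1 k2 A B) := by
  rw [extIdealRight, Ideal.map_le_iff_le_comap]
  intro f hf
  have key : (aeval (R := k) (fun j => ∏ i, X i ^ glueList k1 k2 A B j i) :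
        MvPolynomial (σ ⊕ τ) k →ₐ[k] _).comp (rename (Sum.inr : τ → σ ⊕ τ))
      = (aeval (R := k) (fun i : Fin n => (X i : MvPolynomial (Fin n) k) ^ k2)).comp
          (aeval (fun j => ∏ i, X i ^ B j i)) := by
    apply algHom_ext
    intro j
    simp [glueList, pow_mul]
  simp only [toricIdeal, Ideal.mem_comap, RingHom.mem_ker, RingHom.coe_coe] at hf ⊢
  have := congrArg (fun φ => φ f) key
  simp only [AlgHom.comp_apply] at this
  rw [this, hf, map_zero]
end rev


section aux2
variable {k : Type*} [CommRing k] {n : ℕ} {σ : Type*} [Fintype σ]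
/-- If `f` lies in the toric ideal, it is a combination of binomials from the ideal:
any ideal `J` containing all binomials of `D` contains `f`. -/
lemma mem_of_mem_toricIdeal (D : σ → Fin n → ℕ) (J : Ideal (MvPolynomial σ k))
    (hbin : ∀ m m' : σ →₀ ℕ, wvec D m = wvec D m' →
      monomial m (1:k) - monomial m' 1 ∈ J)
    {f : MvPolynomial σ k} (hf : f ∈ toricIdeal k D) : f ∈ J := by
  classical
  generalize hN : f.support.card = N
  induction N using Nat.strong_induction_on generalizing f with
  | _ N ih =>
    rcases eq_or_ne f 0 with rfl | hf0
    · exact J.zero_mem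
    · obtain ⟨m, hm⟩ := (MvPolynomial.support_nonempty.mpr hf0)
      have hker : aeval (R := k) (fun j => ∏ i, (X i : MvPolynomial (Fin n) k) ^ D j i) f
          = 0 := by
        have h' := hf
        rw [toricIdeal, RingHom.mem_ker] at h'
        exact h'
      have hco : (∑ x ∈ f.support, if wvec D x = wvec D m then coeff x f else 0) = 0 := by
        rw [← coeff_aeval_toric, hker, coeff_zero]
      rw [← Finset.add_sum_erase _ _ hm, if_pos rfl] at hco
      have hcm : coeff m f ≠ 0 := mem_support_iff.mp hm
      have hrest : (∑ x ∈ f.support.erase m,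
          if wvec D x = wvec D m then coeff x f else 0) ≠ 0 := by
        intro h0
        rw [h0, add_zero] at hco
        exact hcm hco
      obtain ⟨m', hm'mem, hm'ne⟩ := Finset.exists_ne_zero_of_sum_ne_zero hrest
      have hwm' : wvec D m' = wvec D m := by
        by_contra hw
        rw [if_neg hw] at hm'ne
        exact hm'ne rfl
      obtain ⟨hm'nem, hm'supp⟩ := Finset.mem_erase.mp hm'mem
      set c := coeff m f with hc
      set g := f - C c * (monomial m 1 - monomial m' 1) with hg
      have hbinJ : monomial m (1:k) - monomial m' 1 ∈ J := hbin m m' hwm'.symm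
      have hbinker : monomial m (1:k) - monomial m' 1 ∈ toricIdeal k D :=
        binomial_mem_ker D hwm'.symm
      have hgker : g ∈ toricIdeal k D :=
        Ideal.sub_mem _ hf (Ideal.mul_mem_left _ _ hbinker)
      have hsub : g.support ⊆ f.support.erase m := by
        intro x hx
        rw [mem_support_iff] at hx
        rw [Finset.mem_erase]
        constructor
        · rintro rfl
          apply hx
          simp [hg, coeff_sub, coeff_C_mul, coeff_monomial, hm'nem, hc]
        · by_contra hxf
          apply hx
          rw [mem_support_iff, not_not] at hxf
          have hxm : x ≠ m := by
            rintro rfl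
            exact hcm hxf
          have hxm' : x ≠ m' := by
            rintro rfl
            exact (mem_support_iff.mp hm'supp) hxf
          simp [hg, coeff_sub, coeff_C_mul, coeff_monomial, hxf,
            Ne.symm hxm, Ne.symm hxm']
      have hcard : g.support.card < N := by
        calc g.support.card ≤ (f.support.erase m).card := Finset.card_le_card hsub
        _ < f.support.card := Finset.card_erase_lt_of_mem hm
        _ = N := hN
      have hgJ : g ∈ J := ih _ hcard hgker rfl
      have : f = g + C c * (monomial m 1 - monomial m' 1) := by rw [hg]; ring
      rw [this]
      exact J.add_mem hgJ (J.mul_mem_left _ hbinJ)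
end aux2


end ToricSplitAux

/-- If `rk (A|B) = rk A + rk B` (the `ℚ`-spans of the columns of `A` and
`B` meet only in `0`), then for all positive `k₁, k₂` the toric ideal of `C = k₁A ⊔ k₂B`
splits: `I_C = I_A·R + I_B·R`. -/
theorem toricIdeal_splits (k : Type*) [Field k] {n p q : ℕ} (hn : 1 ≤ n)
    (A : Fin p → Fin n → ℕ) (B : Fin q → Fin n → ℕ)
    (h : rkQ (Sum.elim A B) = rkQ A + rkQ B)
    (k1 k2 : ℕ) (hk1 : 0 < k1) (hk2 : 0 < k2) :
    toricIdeal k (glueList k1 k2 A B) =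
      extIdealLeft k (Fin q) A + extIdealRight k (Fin p) B := by
  classical
  have hbot := inf_eq_bot_of_rk A B h
  apply le_antisymm
  · intro f hf
    exact mem_of_mem_toricIdeal (glueList k1 k2 A B) _
      (fun m m' hw => binomial_split A B hbot hk1 hk2 hw) hf
  · rw [Submodule.add_eq_sup]
    exact sup_le (extLeft_le_ker k A B k1 k2) (extRight_le_ker k A B k1 k2)
end

section
/- Let k be a field, p, q ≥ 3, and let 0 < a_1 < … < a_{p−2} < c and 0 < b_1 < … < b_{q−2} < d be integers. Fix i ∈ {1,…,p−2} with gcd(d, a_i) = 1, and write c = m·a_i − r with m ≥ 2 and 0 ≤ r < a_i. Define lists A' = (a'_1,…,a'_p) and B' = (b'_1,…,b'_q) in ℕ³ by: a'_1 = (c + r, 0, 0), a'_{j+1} = (c − a_j + r, a_j, 0) for j = 1,…,p−2, a'_p = (r, c, 0); and b'_1 = ((m−1)d, d, 0), b'_{j+1} = ((m−1)d, d − b_j, b_j) for j = 1,…,q−2, b'_q = ((m−1)d, 0, d). Then C = dA' ⋈ a_iB'; more precisely, for C = dA' ⊔ a_iB' one has I_C = I_{A'}·R + I_{B'}·R + ⟨x_{i+1}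 − y_1⟩. -/
open MvPolynomial

/-- The list `A'` in `ℕ³` (with `p` interior entries): `a'_1 = (c+r, 0, 0)`,
`a'_{j+1} = (c - a_j + r, a_j, 0)`, `a'_p = (r, c, 0)`. -/
def caseListA (p : ℕ) (a : Fin p → ℕ) (c r : ℕ) : (Unit ⊕ Fin p ⊕ Unit) → Fin 3 → ℕ :=
  Sum.elim (fun _ => ![c + r, 0, 0])
    (Sum.elim (fun j => ![c - a j + r, a j, 0]) (fun _ => ![r, c, 0]))

/-- The list `B'` in `ℕ³` (with `q` interior entries): `b'_1 = ((m−1)d, d, 0)`,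
`b'_{j+1} = ((m−1)d, d − b_j, b_j)`, `b'_q = ((m−1)d, 0, d)`. -/
def caseListB (q : ℕ) (b : Fin q → ℕ) (d m : ℕ) : (Unit ⊕ Fin q ⊕ Unit) → Fin 3 → ℕ :=
  Sum.elim (fun _ => ![(m - 1) * d, d, 0])
    (Sum.elim (fun j => ![(m - 1) * d, d - b j, b j]) (fun _ => ![(m - 1) * d, 0, d]))


/-! ### Auxiliary machinery for the proof -/

section ToricAux

variable {k : Type*} [CommRing k] {σ : Type*} [Fintype σ] {n : ℕ}

/-- A full-Fintype product of powers of variables is a monomial. -/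
lemma hdg_prodXpow (v : σ →₀ ℕ) :
    ∏ j : σ, (X j : MvPolynomial σ k) ^ v j = monomial v 1 := by
  classical
  rw [← prod_X_pow_eq_monomial]
  exact (Finset.prod_subset (Finset.subset_univ _) (fun i _ h => by
    rw [Finsupp.notMem_support_iff.mp h, pow_zero])).symm

/-- The `A`-degree of an exponent vector. -/
def hdg_tdeg (A : σ → Fin n → ℕ) (u : σ →₀ ℕ) : Fin n → ℕ := fun t => ∑ j, u j * A j t

lemma hdg_aeval_prod_pow (A : σ → Fin n → ℕ) (x : σ → ℕ) :
    aeval (R := k) (fun j => ∏ i, (X i : MvPolynomial (Fin n) k) ^ A j i) (∏ j, X j ^ x j) =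
      ∏ t, X t ^ (∑ j, x j * A j t) := by
  simp only [map_prod, map_pow, aeval_X]
  simp_rw [← Finset.prod_pow, ← pow_mul]
  rw [Finset.prod_comm]
  refine Finset.prod_congr rfl fun t _ => ?_
  rw [← Finset.prod_pow_eq_pow_sum]
  exact Finset.prod_congr rfl fun j _ => by rw [mul_comm]

lemma hdg_aeval_toric_monomial (A : σ → Fin n → ℕ) (u : σ →₀ ℕ) (c : k) :
    aeval (R := k) (fun j => ∏ i, (X i : MvPolynomial (Fin n) k) ^ A j i) (monomial u c) =
      monomial (Finsupp.equivFunOnFinite.symm (hdg_tdeg A u)) c := by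
  have h1 : (monomial u c : MvPolynomial σ k) = C c * ∏ j, X j ^ u j := by
    rw [hdg_prodXpow, C_mul_monomial, mul_one]
  rw [h1, map_mul, aeval_C, hdg_aeval_prod_pow, algebraMap_eq]
  rw [show (∏ t, (X t : MvPolynomial (Fin n) k) ^ (∑ j, u j * A j t)) =
      monomial (Finsupp.equivFunOnFinite.symm (hdg_tdeg A u)) 1 by
    rw [← hdg_prodXpow]; rfl]
  rw [C_mul_monomial, mul_one]

/-- A toric ideal is spanned (as a `k`-module) by binomials of equal degree. -/
lemma hdg_toric_mem_span (A : σ → Fin n → ℕ) {f : MvPolynomial σ k}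
    (hf : f ∈ toricIdeal k A) :
    f ∈ Submodule.span k {g : MvPolynomial σ k |
      ∃ u u' : σ →₀ ℕ, hdg_tdeg A u = hdg_tdeg A u' ∧ g = monomial u 1 - monomial u' 1} := by
  classical
  have hφ : (aeval (R := k) (fun j => ∏ i, (X i : MvPolynomial (Fin n) k) ^ A j i)) f = 0 := hf
  have hexp : (aeval (R := k) (fun j => ∏ i, (X i : MvPolynomial (Fin n) k) ^ A j i)) f =
      ∑ u ∈ f.support, monomial (Finsupp.equivFunOnFinite.symm (hdg_tdeg A u)) (f.coeff u) := by
    conv_lhs => rw [← support_sum_monomial_coeff f]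
    rw [map_sum]
    exact Finset.sum_congr rfl fun u _ => hdg_aeval_toric_monomial A u _
  have hcoeff : ∀ w : Fin n → ℕ,
      ∑ u ∈ f.support.filter (fun u => hdg_tdeg A u = w), f.coeff u = 0 := by
    intro w
    have h0 : coeff (Finsupp.equivFunOnFinite.symm w)
        ((aeval (R := k) (fun j => ∏ i, (X i : MvPolynomial (Fin n) k) ^ A j i)) f) = 0 := by
      rw [hφ, coeff_zero]
    rw [hexp] at h0
    rw [coeff_sum] at h0
    rw [Finset.sum_filter]
    refine Eq.trans ?_ h0
    refine Finset.sum_congr rfl fun u _ => ?_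
    rw [coeff_monomial]
    exact if_congr Finsupp.equivFunOnFinite.symm.injective.eq_iff.symm rfl rfl
  set rep : (Fin n → ℕ) → (σ →₀ ℕ) := fun w =>
    if h : ∃ u ∈ f.support, hdg_tdeg A u = w then h.choose else 0 with hrepdef
  have hrep : ∀ w ∈ f.support.image (hdg_tdeg A),
      rep w ∈ f.support ∧ hdg_tdeg A (rep w) = w := by
    intro w hw
    rw [Finset.mem_image] at hw
    obtain ⟨u, hu, htu⟩ := hw
    have hex : ∃ u ∈ f.support, hdg_tdeg A u = w := ⟨u, hu, htu⟩
    rw [hrepdef]; simp only [dif_pos hex]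
    exact hex.choose_spec
  have hsum2 : ∑ u ∈ f.support,
      (f.coeff u) • (monomial (rep (hdg_tdeg A u)) 1 : MvPolynomial σ k) = 0 := by
    rw [← Finset.sum_fiberwise_of_maps_to
      (g := hdg_tdeg A) (t := f.support.image (hdg_tdeg A))
      (fun u hu => Finset.mem_image_of_mem _ hu)]
    refine Finset.sum_eq_zero fun w hw => ?_
    have heq : ∀ u ∈ f.support.filter (fun u => hdg_tdeg A u = w),
        (f.coeff u) • (monomial (rep (hdg_tdeg A u)) 1 : MvPolynomial σ k) =
          (f.coeff u) • (monomial (rep w) 1) := by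
      intro u hu
      rw [(Finset.mem_filter.mp hu).2]
    rw [Finset.sum_congr rfl heq, ← Finset.sum_smul, hcoeff w, zero_smul]
  have hf2 : f = ∑ u ∈ f.support,
      (f.coeff u) • ((monomial u 1 - monomial (rep (hdg_tdeg A u)) 1 : MvPolynomial σ k)) := by
    simp_rw [smul_sub]
    rw [Finset.sum_sub_distrib, hsum2, sub_zero]
    simp_rw [smul_monomial, smul_eq_mul, mul_one]
    exact (support_sum_monomial_coeff f).symm
  rw [hf2]
  refine Submodule.sum_mem _ fun u hu => Submodule.smul_mem _ _ (Submodule.subset_span ?_)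
  exact ⟨u, rep (hdg_tdeg A u), ((hrep _ (Finset.mem_image_of_mem _ hu)).2).symm, rfl⟩

/-- A binomial with matching `A`-degrees lies in the toric ideal. -/
lemma hdg_toric_binomial_mem (A : σ → Fin n → ℕ) (x y : σ → ℕ) (j0 : σ) (N : ℕ)
    (h : ∀ t, ∑ j, x j * A j t = (∑ j, y j * A j t) + N * A j0 t) :
    (∏ j, X j ^ x j) - (∏ j, X j ^ y j) * X j0 ^ N ∈ toricIdeal k A := by
  have h' : ∀ t, ∑ j, x j * A j t = (∑ j, y j * A j t) + A j0 t * N :=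
    fun t => by rw [h t, mul_comm N]
  rw [toricIdeal, RingHom.mem_ker, map_sub, map_mul, map_pow, hdg_aeval_prod_pow,
    hdg_aeval_prod_pow, aeval_X, ← Finset.prod_pow]
  simp_rw [← pow_mul]
  rw [← Finset.prod_mul_distrib]
  simp_rw [← pow_add, h']
  exact sub_self _

end ToricAux

section SplitAux

variable {k : Type*} [CommRing k] {σ τ : Type*} [Fintype σ] [Fintype τ]

/-- Splitting a monomial on a sum type into renamed pieces. -/
lemma hdg_monomial_split (w : σ ⊕ τ →₀ ℕ) :
    (monomial w 1 : MvPolynomial (σ ⊕ τ) k) =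
      rename Sum.inl (∏ j, X j ^ w (Sum.inl j)) * rename Sum.inr (∏ j, X j ^ w (Sum.inr j)) := by
  rw [← hdg_prodXpow w, Fintype.prod_sum_type (f := fun j => (X j : MvPolynomial (σ ⊕ τ) k) ^ w j)]
  simp only [map_prod, map_pow, rename_X]

/-- The left extension ideal is contained in the glued toric ideal. -/
lemma hdg_extL_le {n : ℕ} (A : σ → Fin n → ℕ) (B : τ → Fin n → ℕ) (k1 k2 : ℕ) :
    extIdealLeft k τ A ≤ toricIdeal k (glueList k1 k2 A B) := by
  rw [extIdealLeft, Ideal.map_le_iff_le_comap]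
  intro f hf
  rw [toricIdeal, RingHom.mem_ker] at hf
  rw [Ideal.mem_comap, toricIdeal, RingHom.mem_ker, aeval_rename]
  have hcomp : ((aeval (fun t : Fin n => (X t : MvPolynomial (Fin n) k) ^ k1)).comp
      (aeval (R := k) (fun j : σ => ∏ i, (X i : MvPolynomial (Fin n) k) ^ A j i))) =
      aeval (fun j : σ => ∏ i, (X i : MvPolynomial (Fin n) k) ^ (k1 * A j i)) := by
    apply MvPolynomial.algHom_ext
    intro j
    simp only [AlgHom.comp_apply, aeval_X, map_prod, map_pow]
    exact Finset.prod_congr rfl fun t _ => by rw [pow_mul]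
  have hfun : ((fun j : σ ⊕ τ => ∏ i, (X i : MvPolynomial (Fin n) k) ^
      glueList k1 k2 A B j i) ∘ Sum.inl) =
      fun j : σ => ∏ i, (X i : MvPolynomial (Fin n) k) ^ (k1 * A j i) := rfl
  rw [hfun, ← hcomp, AlgHom.comp_apply, hf, map_zero]

/-- The right extension ideal is contained in the glued toric ideal. -/
lemma hdg_extR_le {n : ℕ} (A : σ → Fin n → ℕ) (B : τ → Fin n → ℕ) (k1 k2 : ℕ) :
    extIdealRight k σ B ≤ toricIdeal k (glueList k1 k2 A B) := by
  rw [extIdealRight, Ideal.map_le_iff_le_comap]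
  intro f hf
  rw [toricIdeal, RingHom.mem_ker] at hf
  rw [Ideal.mem_comap, toricIdeal, RingHom.mem_ker, aeval_rename]
  have hcomp : ((aeval (fun t : Fin n => (X t : MvPolynomial (Fin n) k) ^ k2)).comp
      (aeval (R := k) (fun j : τ => ∏ i, (X i : MvPolynomial (Fin n) k) ^ B j i))) =
      aeval (fun j : τ => ∏ i, (X i : MvPolynomial (Fin n) k) ^ (k2 * B j i)) := by
    apply MvPolynomial.algHom_ext
    intro j
    simp only [AlgHom.comp_apply, aeval_X, map_prod, map_pow]
    exact Finset.prod_congr rfl fun t _ => by rw [pow_mul]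
  have hfun : ((fun j : σ ⊕ τ => ∏ i, (X i : MvPolynomial (Fin n) k) ^
      glueList k1 k2 A B j i) ∘ Sum.inr) =
      fun j : τ => ∏ i, (X i : MvPolynomial (Fin n) k) ^ (k2 * B j i) := rfl
  rw [hfun, ← hcomp, AlgHom.comp_apply, hf, map_zero]

end SplitAux

section CaseAux

variable {p q : ℕ}

lemma hdg_caseA_2 (a : Fin p → ℕ) (c r : ℕ) (j) : caseListA p a c r j 2 = 0 := by
  rcases j with ⟨⟩ | j | ⟨⟩ <;> rfl

lemma hdg_caseA_01 (a : Fin p → ℕ) (c r : ℕ) (hac : ∀ j, a j ≤ c) (j) :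
    caseListA p a c r j 0 + caseListA p a c r j 1 = c + r := by
  rcases j with ⟨⟩ | j | ⟨⟩
  · show c + r + 0 = c + r; omega
  · show c - a j + r + a j = c + r; have := hac j; omega
  · show r + c = c + r; omega

lemma hdg_caseB_0 (b : Fin q → ℕ) (d m : ℕ) (j) : caseListB q b d m j 0 = (m - 1) * d := by
  rcases j with ⟨⟩ | j | ⟨⟩ <;> rfl

lemma hdg_caseB_12 (b : Fin q → ℕ) (d m : ℕ) (hbd : ∀ j, b j ≤ d) (j) :
    caseListB q b d m j 1 + caseListB q b d m j 2 = d := by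
  rcases j with ⟨⟩ | j | ⟨⟩
  · show d + 0 = d; omega
  · show d - b j + b j = d; have := hbd j; omega
  · show 0 + d = d; omega

end CaseAux

lemma hdg_sum_factor {σ : Type*} [Fintype σ] (K : ℕ) (g h : σ → ℕ) :
    ∑ j, g j * (K * h j) = K * ∑ j, g j * h j := by
  rw [Finset.mul_sum]; exact Finset.sum_congr rfl fun j _ => by ring

lemma hdg_prod_rename {k : Type*} [CommRing k] {σ τ : Type*} [Fintype σ]
    (f : σ → τ) (v : σ → ℕ) :
    (∏ t : σ, (X (f t) : MvPolynomial τ k) ^ v t) =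
      monomial (Finsupp.mapDomain f (Finsupp.equivFunOnFinite.symm v)) 1 := by
  classical
  have h1 : (∏ t : σ, (X t : MvPolynomial σ k) ^ v t) =
      monomial (Finsupp.equivFunOnFinite.symm v) 1 := by
    rw [← hdg_prodXpow]; rfl
  calc (∏ t : σ, (X (f t) : MvPolynomial τ k) ^ v t)
      = rename f (∏ t : σ, (X t : MvPolynomial σ k) ^ v t) := by
        simp only [map_prod, map_pow, rename_X]
    _ = _ := by rw [h1, rename_monomial]

lemma hdg_glue_deg {σ τ : Type*} [Fintype σ] [Fintype τ] {n : ℕ} (A : σ → Fin n → ℕ)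
    (B : τ → Fin n → ℕ) (k1 k2 : ℕ) (w : σ ⊕ τ → ℕ) (t : Fin n) :
    ∑ j, w j * glueList k1 k2 A B j t
      = k1 * (∑ j, w (Sum.inl j) * A j t) + k2 * (∑ j, w (Sum.inr j) * B j t) := by
  rw [Fintype.sum_sum_type (f := fun j => w j * glueList k1 k2 A B j t)]
  simp only [glueList, Sum.elim_inl, Sum.elim_inr]
  rw [hdg_sum_factor, hdg_sum_factor]

set_option maxHeartbeats 1000000 in
/-- The key combinatorial step: any binomial of `I_C` lies in
`I_A·R + I_B·R + ⟨ρ⟩`, assuming the second group of exponents does not decrease. -/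
lemma hdg_binomial_in_J (k : Type*) [Field k] {p q : ℕ} (c d m r : ℕ)
    (a : Fin p → ℕ) (b : Fin q → ℕ) (i : Fin p)
    (hac : ∀ j, a j ≤ c) (hbd : ∀ j, b j ≤ d) (hai : 0 < a i) (hd : 0 < d)
    (hkey : c - a i + r = (m - 1) * a i)
    (u u' : ((Unit ⊕ Fin p ⊕ Unit) ⊕ (Unit ⊕ Fin q ⊕ Unit)) →₀ ℕ)
    (hdeg : hdg_tdeg (glueList d (a i) (caseListA p a c r) (caseListB q b d m)) u =
            hdg_tdeg (glueList d (a i) (caseListA p a c r) (caseListB q b d m)) u')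
    (hle : ∑ j : Unit ⊕ Fin q ⊕ Unit, u (Sum.inr j) ≤
           ∑ j : Unit ⊕ Fin q ⊕ Unit, u' (Sum.inr j)) :
    (monomial u 1 - monomial u' 1 :
        MvPolynomial ((Unit ⊕ Fin p ⊕ Unit) ⊕ (Unit ⊕ Fin q ⊕ Unit)) k) ∈
      extIdealLeft k (Unit ⊕ Fin q ⊕ Unit) (caseListA p a c r) +
      extIdealRight k (Unit ⊕ Fin p ⊕ Unit) (caseListB q b d m) +
      Ideal.span {(X (Sum.inl (Sum.inr (Sum.inl i))) - X (Sum.inr (Sum.inl ())) :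
        MvPolynomial ((Unit ⊕ Fin p ⊕ Unit) ⊕ (Unit ⊕ Fin q ⊕ Unit)) k)} := by
  classical
  -- coordinatewise degree equations
  have hdegt : ∀ t, d * (∑ j, u (Sum.inl j) * caseListA p a c r j t)
        + a i * (∑ j, u (Sum.inr j) * caseListB q b d m j t)
      = d * (∑ j, u' (Sum.inl j) * caseListA p a c r j t)
        + a i * (∑ j, u' (Sum.inr j) * caseListB q b d m j t) := by
    intro t
    have h1 := congrFun hdeg t
    simp only [hdg_tdeg] at h1
    rw [hdg_glue_deg, hdg_glue_deg] at h1
    exact h1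
  -- structural sum identities
  have hsA2 : ∀ x : Unit ⊕ Fin p ⊕ Unit → ℕ, (∑ j, x j * caseListA p a c r j 2) = 0 :=
    fun x => Finset.sum_eq_zero fun j _ => by rw [hdg_caseA_2, mul_zero]
  have hsA01 : ∀ x : Unit ⊕ Fin p ⊕ Unit → ℕ,
      (∑ j, x j * caseListA p a c r j 0) + (∑ j, x j * caseListA p a c r j 1)
        = (∑ j, x j) * (c + r) := by
    intro x
    rw [← Finset.sum_add_distrib, Finset.sum_mul]
    exact Finset.sum_congr rfl fun j _ => by rw [← mul_add, hdg_caseA_01 a c r hac j]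
  have hsB0 : ∀ y : Unit ⊕ Fin q ⊕ Unit → ℕ,
      (∑ j, y j * caseListB q b d m j 0) = (∑ j, y j) * ((m - 1) * d) := by
    intro y
    rw [Finset.sum_mul]
    exact Finset.sum_congr rfl fun j _ => by rw [hdg_caseB_0]
  have hsB12 : ∀ y : Unit ⊕ Fin q ⊕ Unit → ℕ,
      (∑ j, y j * caseListB q b d m j 1) + (∑ j, y j * caseListB q b d m j 2)
        = (∑ j, y j) * d := by
    intro y
    rw [← Finset.sum_add_distrib, Finset.sum_mul]
    exact Finset.sum_congr rfl fun j _ => by rw [← mul_add, hdg_caseB_12 b d m hbd j]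
  -- the integer N
  set N : ℕ := (∑ j, u' (Sum.inr j)) - (∑ j, u (Sum.inr j)) with hNdef
  have hSv : (∑ j, u' (Sum.inr j)) = (∑ j, u (Sum.inr j)) + N := by omega
  -- second coordinates of B agree
  have hB2 : (∑ j, u (Sum.inr j) * caseListB q b d m j 2)
      = (∑ j, u' (Sum.inr j) * caseListB q b d m j 2) := by
    have h2 := hdegt 2
    rw [hsA2, hsA2, mul_zero, zero_add, zero_add] at h2
    exact Nat.eq_of_mul_eq_mul_left hai h2
  -- pass to ℤ
  have hd0 : (d : ℤ) ≠ 0 := by exact_mod_cast hd.ne'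
  have zB12u : ((∑ j, u (Sum.inr j) * caseListB q b d m j 1 : ℕ) : ℤ)
      + ((∑ j, u (Sum.inr j) * caseListB q b d m j 2 : ℕ) : ℤ)
      = ((∑ j, u (Sum.inr j) : ℕ) : ℤ) * (d : ℤ) := by
    exact_mod_cast hsB12 (fun j => u (Sum.inr j))
  have zB12u' : ((∑ j, u' (Sum.inr j) * caseListB q b d m j 1 : ℕ) : ℤ)
      + ((∑ j, u' (Sum.inr j) * caseListB q b d m j 2 : ℕ) : ℤ)
      = ((∑ j, u' (Sum.inr j) : ℕ) : ℤ) * (d : ℤ) := by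
    exact_mod_cast hsB12 (fun j => u' (Sum.inr j))
  have zB0u : ((∑ j, u (Sum.inr j) * caseListB q b d m j 0 : ℕ) : ℤ)
      = ((∑ j, u (Sum.inr j) : ℕ) : ℤ) * (((m - 1 : ℕ) : ℤ) * (d : ℤ)) := by
    exact_mod_cast hsB0 (fun j => u (Sum.inr j))
  have zB0u' : ((∑ j, u' (Sum.inr j) * caseListB q b d m j 0 : ℕ) : ℤ)
      = ((∑ j, u' (Sum.inr j) : ℕ) : ℤ) * (((m - 1 : ℕ) : ℤ) * (d : ℤ)) := by
    exact_mod_cast hsB0 (fun j => u' (Sum.inr j))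
  have zB2 : ((∑ j, u (Sum.inr j) * caseListB q b d m j 2 : ℕ) : ℤ)
      = ((∑ j, u' (Sum.inr j) * caseListB q b d m j 2 : ℕ) : ℤ) := by exact_mod_cast hB2
  have zSv : ((∑ j, u' (Sum.inr j) : ℕ) : ℤ) = ((∑ j, u (Sum.inr j) : ℕ) : ℤ) + (N : ℤ) := by
    exact_mod_cast hSv
  have hSvd : ((∑ j, u' (Sum.inr j) : ℕ) : ℤ) * (d : ℤ)
      = ((∑ j, u (Sum.inr j) : ℕ) : ℤ) * (d : ℤ) + (N : ℤ) * (d : ℤ) := by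
    rw [zSv]; ring
  have hSvd0 : ((∑ j, u' (Sum.inr j) : ℕ) : ℤ) * (((m - 1 : ℕ) : ℤ) * (d : ℤ))
      = ((∑ j, u (Sum.inr j) : ℕ) : ℤ) * (((m - 1 : ℕ) : ℤ) * (d : ℤ))
        + (N : ℤ) * (((m - 1 : ℕ) : ℤ) * (d : ℤ)) := by
    rw [zSv]; ring
  have zEB1 : ((∑ j, u' (Sum.inr j) * caseListB q b d m j 1 : ℕ) : ℤ)
      = ((∑ j, u (Sum.inr j) * caseListB q b d m j 1 : ℕ) : ℤ) + (N : ℤ) * (d : ℤ) := by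
    linarith [zB12u, zB12u', zB2, hSvd]
  have zEB0 : ((∑ j, u' (Sum.inr j) * caseListB q b d m j 0 : ℕ) : ℤ)
      = ((∑ j, u (Sum.inr j) * caseListB q b d m j 0 : ℕ) : ℤ)
        + (N : ℤ) * (((m - 1 : ℕ) : ℤ) * (d : ℤ)) := by
    linarith [zB0u, zB0u', hSvd0]
  have zdeg1 : (d : ℤ) * ((∑ j, u (Sum.inl j) * caseListA p a c r j 1 : ℕ) : ℤ)
        + ((a i : ℕ) : ℤ) * ((∑ j, u (Sum.inr j) * caseListB q b d m j 1 : ℕ) : ℤ)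
      = (d : ℤ) * ((∑ j, u' (Sum.inl j) * caseListA p a c r j 1 : ℕ) : ℤ)
        + ((a i : ℕ) : ℤ) * ((∑ j, u' (Sum.inr j) * caseListB q b d m j 1 : ℕ) : ℤ) := by
    exact_mod_cast hdegt 1
  have zdeg0 : (d : ℤ) * ((∑ j, u (Sum.inl j) * caseListA p a c r j 0 : ℕ) : ℤ)
        + ((a i : ℕ) : ℤ) * ((∑ j, u (Sum.inr j) * caseListB q b d m j 0 : ℕ) : ℤ)
      = (d : ℤ) * ((∑ j, u' (Sum.inl j) * caseListA p a c r j 0 : ℕ) : ℤ)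
        + ((a i : ℕ) : ℤ) * ((∑ j, u' (Sum.inr j) * caseListB q b d m j 0 : ℕ) : ℤ) := by
    exact_mod_cast hdegt 0
  have h5 : (d : ℤ) * ((∑ j, u (Sum.inl j) * caseListA p a c r j 1 : ℕ) : ℤ)
      = (d : ℤ) * (((∑ j, u' (Sum.inl j) * caseListA p a c r j 1 : ℕ) : ℤ)
          + (N : ℤ) * ((a i : ℕ) : ℤ)) := by
    linear_combination zdeg1 + ((a i : ℕ) : ℤ) * zEB1
  have zEA1 := mul_left_cancel₀ hd0 h5
  have h6 : (d : ℤ) * ((∑ j, u (Sum.inl j) * caseListA p a c r j 0 : ℕ) : ℤ)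
      = (d : ℤ) * (((∑ j, u' (Sum.inl j) * caseListA p a c r j 0 : ℕ) : ℤ)
          + (N : ℤ) * (((m - 1 : ℕ) : ℤ) * ((a i : ℕ) : ℤ))) := by
    linear_combination zdeg0 + ((a i : ℕ) : ℤ) * zEB0
  have zEA0 := mul_left_cancel₀ hd0 h6
  -- back to ℕ
  have nEA1 : (∑ j, u (Sum.inl j) * caseListA p a c r j 1)
      = (∑ j, u' (Sum.inl j) * caseListA p a c r j 1) + N * a i := by exact_mod_cast zEA1
  have nEA0 : (∑ j, u (Sum.inl j) * caseListA p a c r j 0)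
      = (∑ j, u' (Sum.inl j) * caseListA p a c r j 0) + N * ((m - 1) * a i) := by
    exact_mod_cast zEA0
  have nEB1 : (∑ j, u' (Sum.inr j) * caseListB q b d m j 1)
      = (∑ j, u (Sum.inr j) * caseListB q b d m j 1) + N * d := by exact_mod_cast zEB1
  have nEB0 : (∑ j, u' (Sum.inr j) * caseListB q b d m j 0)
      = (∑ j, u (Sum.inr j) * caseListB q b d m j 0) + N * ((m - 1) * d) := by
    exact_mod_cast zEB0
  -- assembled coordinatewise identities
  have hEA0 : (∑ j, u (Sum.inl j) * caseListA p a c r j 0)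
      = (∑ j, u' (Sum.inl j) * caseListA p a c r j 0)
        + N * caseListA p a c r (Sum.inr (Sum.inl i)) 0 := by
    rw [show caseListA p a c r (Sum.inr (Sum.inl i)) (0 : Fin 3) = (m - 1) * a i from hkey]
    exact nEA0
  have hEA1 : (∑ j, u (Sum.inl j) * caseListA p a c r j 1)
      = (∑ j, u' (Sum.inl j) * caseListA p a c r j 1)
        + N * caseListA p a c r (Sum.inr (Sum.inl i)) 1 := by
    rw [show caseListA p a c r (Sum.inr (Sum.inl i)) (1 : Fin 3) = a i from rfl]
    exact nEA1
  have hEA2 : (∑ j, u (Sum.inl j) * caseListA p a c r j 2)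
      = (∑ j, u' (Sum.inl j) * caseListA p a c r j 2)
        + N * caseListA p a c r (Sum.inr (Sum.inl i)) 2 := by
    rw [hsA2, hsA2, show caseListA p a c r (Sum.inr (Sum.inl i)) (2 : Fin 3) = 0 from rfl,
      mul_zero, add_zero]
  have hEA : ∀ t, (∑ j, u (Sum.inl j) * caseListA p a c r j t)
      = (∑ j, u' (Sum.inl j) * caseListA p a c r j t)
        + N * caseListA p a c r (Sum.inr (Sum.inl i)) t := by
    intro t
    fin_cases t
    · exact hEA0
    · exact hEA1
    · exact hEA2
  have hEB0 : (∑ j, u' (Sum.inr j) * caseListB q b d m j 0)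
      = (∑ j, u (Sum.inr j) * caseListB q b d m j 0)
        + N * caseListB q b d m (Sum.inl ()) 0 := by
    rw [show caseListB q b d m (Sum.inl ()) (0 : Fin 3) = (m - 1) * d from rfl]
    exact nEB0
  have hEB1 : (∑ j, u' (Sum.inr j) * caseListB q b d m j 1)
      = (∑ j, u (Sum.inr j) * caseListB q b d m j 1)
        + N * caseListB q b d m (Sum.inl ()) 1 := by
    rw [show caseListB q b d m (Sum.inl ()) (1 : Fin 3) = d from rfl]
    exact nEB1
  have hEB2 : (∑ j, u' (Sum.inr j) * caseListB q b d m j 2)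
      = (∑ j, u (Sum.inr j) * caseListB q b d m j 2)
        + N * caseListB q b d m (Sum.inl ()) 2 := by
    rw [show caseListB q b d m (Sum.inl ()) (2 : Fin 3) = 0 from rfl, mul_zero, add_zero]
    exact hB2.symm
  have hEB : ∀ t, (∑ j, u' (Sum.inr j) * caseListB q b d m j t)
      = (∑ j, u (Sum.inr j) * caseListB q b d m j t)
        + N * caseListB q b d m (Sum.inl ()) t := by
    intro t
    fin_cases t
    · exact hEB0
    · exact hEB1
    · exact hEB2
  -- the two binomials
  have hPA : ((∏ j, X j ^ u (Sum.inl j)) - (∏ j, X j ^ u' (Sum.inl j))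
        * X (Sum.inr (Sum.inl i)) ^ N :
      MvPolynomial (Unit ⊕ Fin p ⊕ Unit) k) ∈ toricIdeal k (caseListA p a c r) :=
    hdg_toric_binomial_mem _ _ _ _ _ hEA
  have hPB : ((∏ j, X j ^ u' (Sum.inr j)) - (∏ j, X j ^ u (Sum.inr j))
        * X (Sum.inl ()) ^ N :
      MvPolynomial (Unit ⊕ Fin q ⊕ Unit) k) ∈ toricIdeal k (caseListB q b d m) :=
    hdg_toric_binomial_mem _ _ _ _ _ hEB
  -- assemble
  set J := extIdealLeft k (Unit ⊕ Fin q ⊕ Unit) (caseListA p a c r) +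
      extIdealRight k (Unit ⊕ Fin p ⊕ Unit) (caseListB q b d m) +
      Ideal.span {(X (Sum.inl (Sum.inr (Sum.inl i))) - X (Sum.inr (Sum.inl ())) :
        MvPolynomial ((Unit ⊕ Fin p ⊕ Unit) ⊕ (Unit ⊕ Fin q ⊕ Unit)) k)} with hJdef
  have hJ1 : extIdealLeft k (Unit ⊕ Fin q ⊕ Unit) (caseListA p a c r) ≤ J := by
    rw [hJdef, Submodule.add_eq_sup, Submodule.add_eq_sup]
    exact le_sup_of_le_left le_sup_left
  have hJ2 : extIdealRight k (Unit ⊕ Fin p ⊕ Unit) (caseListB q b d m) ≤ J := by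
    rw [hJdef, Submodule.add_eq_sup, Submodule.add_eq_sup]
    exact le_sup_of_le_left le_sup_right
  have hJ3 : Ideal.span {(X (Sum.inl (Sum.inr (Sum.inl i))) - X (Sum.inr (Sum.inl ())) :
      MvPolynomial ((Unit ⊕ Fin p ⊕ Unit) ⊕ (Unit ⊕ Fin q ⊕ Unit)) k)} ≤ J := by
    rw [hJdef, Submodule.add_eq_sup, Submodule.add_eq_sup]
    exact le_sup_right
  have hmemA : (rename Sum.inl ((∏ j, X j ^ u (Sum.inl j)) - (∏ j, X j ^ u' (Sum.inl j))
      * X (Sum.inr (Sum.inl i)) ^ N) :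
      MvPolynomial ((Unit ⊕ Fin p ⊕ Unit) ⊕ (Unit ⊕ Fin q ⊕ Unit)) k) ∈ J :=
    hJ1 (Ideal.mem_map_of_mem _ hPA)
  have hmemB : (rename Sum.inr ((∏ j, X j ^ u' (Sum.inr j)) - (∏ j, X j ^ u (Sum.inr j))
      * X (Sum.inl ()) ^ N) :
      MvPolynomial ((Unit ⊕ Fin p ⊕ Unit) ⊕ (Unit ⊕ Fin q ⊕ Unit)) k) ∈ J :=
    hJ2 (Ideal.mem_map_of_mem _ hPB)
  have hmemρ : ((X (Sum.inl (Sum.inr (Sum.inl i))) :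
        MvPolynomial ((Unit ⊕ Fin p ⊕ Unit) ⊕ (Unit ⊕ Fin q ⊕ Unit)) k) ^ N
      - X (Sum.inr (Sum.inl ())) ^ N) ∈ J :=
    hJ3 (Ideal.mem_span_singleton.mpr (sub_dvd_pow_sub_pow _ _ N))
  have hg : (monomial u 1 - monomial u' 1 :
      MvPolynomial ((Unit ⊕ Fin p ⊕ Unit) ⊕ (Unit ⊕ Fin q ⊕ Unit)) k) =
      (rename Sum.inl ((∏ j, X j ^ u (Sum.inl j)) - (∏ j, X j ^ u' (Sum.inl j))
          * X (Sum.inr (Sum.inl i)) ^ N)) * (rename Sum.inr (∏ j, X j ^ u (Sum.inr j)))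
      + (rename Sum.inl (∏ j, X j ^ u' (Sum.inl j)))
          * (rename Sum.inr (∏ j, X j ^ u (Sum.inr j)))
          * ((X (Sum.inl (Sum.inr (Sum.inl i)))) ^ N - (X (Sum.inr (Sum.inl ()))) ^ N)
      - (rename Sum.inl (∏ j, X j ^ u' (Sum.inl j)))
          * (rename Sum.inr ((∏ j, X j ^ u' (Sum.inr j)) - (∏ j, X j ^ u (Sum.inr j))
              * X (Sum.inl ()) ^ N)) := by
    rw [hdg_monomial_split u, hdg_monomial_split u']
    simp only [map_sub, map_mul, map_pow, rename_X]
    ring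
  rw [hg]
  exact J.sub_mem (J.add_mem (J.mul_mem_right _ hmemA) (J.mul_mem_left _ hmemρ))
    (J.mul_mem_left _ hmemB)
/-- Gluing two nondegenerate homogeneous semigroups of `ℕ²`, embedded as
degenerate semigroups in `ℕ³`: `C = dA' ⋈ a_iB'`, and more precisely
`I_C = I_{A'}·R + I_{B'}·R + ⟨x_{i+1} − y_1⟩`. -/
theorem homogeneous_dim2_gluing (k : Type*) [Field k] {p q : ℕ} (hp : 0 < p) (hq : 0 < q)
    (c d m r : ℕ) (a : Fin p → ℕ) (b : Fin q → ℕ)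
    (ha0 : ∀ j, 0 < a j) (haMono : StrictMono a) (hac : ∀ j, a j < c)
    (hb0 : ∀ j, 0 < b j) (hbMono : StrictMono b) (hbd : ∀ j, b j < d)
    (i : Fin p) (hcop : Nat.Coprime d (a i))
    (hm : 2 ≤ m) (hr : r < a i) (hc : c + r = m * a i) :
    IsGluing k (caseListA p a c r) (caseListB q b d m) d (a i) ∧
    toricIdeal k (glueList d (a i) (caseListA p a c r) (caseListB q b d m)) =
      extIdealLeft k (Unit ⊕ Fin q ⊕ Unit) (caseListA p a c r) +
      extIdealRight k (Unit ⊕ Fin p ⊕ Unit) (caseListB q b d m) +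
      Ideal.span {(X (Sum.inl (Sum.inr (Sum.inl i))) - X (Sum.inr (Sum.inl ())) :
        MvPolynomial ((Unit ⊕ Fin p ⊕ Unit) ⊕ (Unit ⊕ Fin q ⊕ Unit)) k)} := by
  classical
  have hd : 0 < d := lt_of_le_of_lt (Nat.zero_le _) (hbd ⟨0, hq⟩)
  have hai : 0 < a i := ha0 i
  have hcai : a i < c := hac i
  have hkey : c - a i + r = (m - 1) * a i := by
    have h1 : (m - 1) * a i + a i = m * a i := by
      cases m with
      | zero => omega
      | succ m' => simp [Nat.succ_sub_one, Nat.succ_mul]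
    have h2 : c + r = (m - 1) * a i + a i := by rw [h1]; exact hc
    generalize hK : (m - 1) * a i = K at h2 ⊢
    omega
  set ρ : MvPolynomial ((Unit ⊕ Fin p ⊕ Unit) ⊕ (Unit ⊕ Fin q ⊕ Unit)) k :=
    X (Sum.inl (Sum.inr (Sum.inl i))) - X (Sum.inr (Sum.inl ())) with hρdef
  -- the ideal equality
  have hEQ : toricIdeal k (glueList d (a i) (caseListA p a c r) (caseListB q b d m)) =
      extIdealLeft k (Unit ⊕ Fin q ⊕ Unit) (caseListA p a c r) +
      extIdealRight k (Unit ⊕ Fin p ⊕ Unit) (caseListB q b d m) + Ideal.span {ρ} := by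
    apply le_antisymm
    · intro f hf
      have hspan := hdg_toric_mem_span
        (glueList d (a i) (caseListA p a c r) (caseListB q b d m)) hf
      have hsub : {g : MvPolynomial ((Unit ⊕ Fin p ⊕ Unit) ⊕ (Unit ⊕ Fin q ⊕ Unit)) k |
          ∃ w w', hdg_tdeg (glueList d (a i) (caseListA p a c r) (caseListB q b d m)) w =
              hdg_tdeg (glueList d (a i) (caseListA p a c r) (caseListB q b d m)) w' ∧
            g = monomial w 1 - monomial w' 1} ⊆
          (Submodule.restrictScalars k
            (extIdealLeft k (Unit ⊕ Fin q ⊕ Unit) (caseListA p a c r) +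
             extIdealRight k (Unit ⊕ Fin p ⊕ Unit) (caseListB q b d m) +
             Ideal.span {ρ}) : Set _) := by
        rintro g ⟨w, w', hdegw, rfl⟩
        show (monomial w 1 - monomial w' 1 : MvPolynomial _ k) ∈
          extIdealLeft k (Unit ⊕ Fin q ⊕ Unit) (caseListA p a c r) +
          extIdealRight k (Unit ⊕ Fin p ⊕ Unit) (caseListB q b d m) + Ideal.span {ρ}
        rcases le_total (∑ j, w (Sum.inr j)) (∑ j, w' (Sum.inr j)) with hle | hle
        · exact hdg_binomial_in_J k c d m r a b i (fun j => (hac j).le) (fun j => (hbd j).le)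
            hai hd hkey w w' hdegw hle
        · have h2 := hdg_binomial_in_J k c d m r a b i (fun j => (hac j).le)
            (fun j => (hbd j).le) hai hd hkey w' w hdegw.symm hle
          have h3 := Submodule.neg_mem _ h2
          rwa [neg_sub] at h3
      exact Submodule.span_le.mpr hsub hspan
    · rw [Submodule.add_eq_sup, Submodule.add_eq_sup]
      refine sup_le (sup_le (hdg_extL_le _ _ _ _) (hdg_extR_le _ _ _ _)) ?_
      rw [Ideal.span_le, Set.singleton_subset_iff]
      show ρ ∈ toricIdeal k (glueList d (a i) (caseListA p a c r) (caseListB q b d m))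
      rw [hρdef, toricIdeal, RingHom.mem_ker, map_sub, aeval_X, aeval_X, sub_eq_zero]
      refine Finset.prod_congr rfl fun t _ => ?_
      congr 1
      show d * caseListA p a c r (Sum.inr (Sum.inl i)) t
        = a i * caseListB q b d m (Sum.inl ()) t
      fin_cases t
      · show d * (c - a i + r) = a i * ((m - 1) * d)
        rw [hkey]; ring
      · show d * a i = a i * d
        ring
      · show d * 0 = a i * 0
        rfl
  -- non-membership of ρ
  have hnm : ρ ∉ extIdealLeft k (Unit ⊕ Fin q ⊕ Unit) (caseListA p a c r) +
      extIdealRight k (Unit ⊕ Fin p ⊕ Unit) (caseListB q b d m) := by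
    intro hmem
    have hL : extIdealLeft k (Unit ⊕ Fin q ⊕ Unit) (caseListA p a c r) ≤
        RingHom.ker (aeval (R := k) (Sum.elim
          (fun j : Unit ⊕ Fin p ⊕ Unit => ∏ t : Fin 3,
            (X (Sum.inl t) : MvPolynomial (Fin 3 ⊕ Fin 3) k) ^ caseListA p a c r j t)
          (fun j : Unit ⊕ Fin q ⊕ Unit => ∏ t : Fin 3,
            (X (Sum.inr t) : MvPolynomial (Fin 3 ⊕ Fin 3) k) ^ caseListB q b d m j t)) :
          MvPolynomial ((Unit ⊕ Fin p ⊕ Unit) ⊕ (Unit ⊕ Fin q ⊕ Unit)) k →ₐ[k]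
            MvPolynomial (Fin 3 ⊕ Fin 3) k) := by
      rw [extIdealLeft, Ideal.map_le_iff_le_comap]
      intro f hf
      rw [toricIdeal, RingHom.mem_ker] at hf
      rw [Ideal.mem_comap, RingHom.mem_ker, aeval_rename, Sum.elim_comp_inl]
      have hcomp : ((rename (Sum.inl : Fin 3 → Fin 3 ⊕ Fin 3)).comp
            (aeval (R := k) (fun j : Unit ⊕ Fin p ⊕ Unit =>
              ∏ t, (X t : MvPolynomial (Fin 3) k) ^ caseListA p a c r j t)))
          = aeval (fun j : Unit ⊕ Fin p ⊕ Unit => ∏ t : Fin 3,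
              (X (Sum.inl t) : MvPolynomial (Fin 3 ⊕ Fin 3) k) ^ caseListA p a c r j t) := by
        apply MvPolynomial.algHom_ext
        intro j
        simp only [AlgHom.comp_apply, aeval_X, map_prod, map_pow, rename_X]
      rw [← hcomp, AlgHom.comp_apply, hf, map_zero]
    have hR : extIdealRight k (Unit ⊕ Fin p ⊕ Unit) (caseListB q b d m) ≤
        RingHom.ker (aeval (R := k) (Sum.elim
          (fun j : Unit ⊕ Fin p ⊕ Unit => ∏ t : Fin 3,
            (X (Sum.inl t) : MvPolynomial (Fin 3 ⊕ Fin 3) k) ^ caseListA p a c r j t)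
          (fun j : Unit ⊕ Fin q ⊕ Unit => ∏ t : Fin 3,
            (X (Sum.inr t) : MvPolynomial (Fin 3 ⊕ Fin 3) k) ^ caseListB q b d m j t)) :
          MvPolynomial ((Unit ⊕ Fin p ⊕ Unit) ⊕ (Unit ⊕ Fin q ⊕ Unit)) k →ₐ[k]
            MvPolynomial (Fin 3 ⊕ Fin 3) k) := by
      rw [extIdealRight, Ideal.map_le_iff_le_comap]
      intro f hf
      rw [toricIdeal, RingHom.mem_ker] at hf
      rw [Ideal.mem_comap, RingHom.mem_ker, aeval_rename, Sum.elim_comp_inr]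
      have hcomp : ((rename (Sum.inr : Fin 3 → Fin 3 ⊕ Fin 3)).comp
            (aeval (R := k) (fun j : Unit ⊕ Fin q ⊕ Unit =>
              ∏ t, (X t : MvPolynomial (Fin 3) k) ^ caseListB q b d m j t)))
          = aeval (fun j : Unit ⊕ Fin q ⊕ Unit => ∏ t : Fin 3,
              (X (Sum.inr t) : MvPolynomial (Fin 3 ⊕ Fin 3) k) ^ caseListB q b d m j t) := by
        apply MvPolynomial.algHom_ext
        intro j
        simp only [AlgHom.comp_apply, aeval_X, map_prod, map_pow, rename_X]
      rw [← hcomp, AlgHom.comp_apply, hf, map_zero]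
    rw [Submodule.add_eq_sup] at hmem
    have hker := (sup_le hL hR) hmem
    rw [RingHom.mem_ker, hρdef, map_sub, aeval_X, aeval_X, Sum.elim_inl, Sum.elim_inr,
      sub_eq_zero, hdg_prod_rename Sum.inl, hdg_prod_rename Sum.inr] at hker
    have hco := congrArg (coeff (Finsupp.mapDomain Sum.inl
      (Finsupp.equivFunOnFinite.symm (caseListA p a c r (Sum.inr (Sum.inl i)))))) hker
    rw [coeff_monomial, coeff_monomial, if_pos rfl] at hco
    have hne : Finsupp.mapDomain (Sum.inr : Fin 3 → Fin 3 ⊕ Fin 3)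
        (Finsupp.equivFunOnFinite.symm (caseListB q b d m (Sum.inl ()))) ≠
        Finsupp.mapDomain Sum.inl
        (Finsupp.equivFunOnFinite.symm (caseListA p a c r (Sum.inr (Sum.inl i)))) := by
      intro hEq
      have h2 := DFunLike.congr_fun hEq (Sum.inl (1 : Fin 3))
      rw [Finsupp.mapDomain_notin_range _ _ (by simp),
        Finsupp.mapDomain_apply Sum.inl_injective] at h2
      have h3 : caseListA p a c r (Sum.inr (Sum.inl i)) 1 = a i := rfl
      simp only [Finsupp.coe_equivFunOnFinite_symm, h3] at h2
      omega
    rw [if_neg hne] at hco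
    exact one_ne_zero hco
  -- conclusion
  refine ⟨⟨(fun j => if j = Sum.inr (Sum.inl i) then 1 else 0),
          (fun j => if j = Sum.inl () then 1 else 0), ?_, ?_⟩, hEQ⟩
  · show ((∏ j : Unit ⊕ Fin p ⊕ Unit,
        (X (Sum.inl j) : MvPolynomial ((Unit ⊕ Fin p ⊕ Unit) ⊕ (Unit ⊕ Fin q ⊕ Unit)) k) ^
          (if j = Sum.inr (Sum.inl i) then 1 else 0)) -
        ∏ j : Unit ⊕ Fin q ⊕ Unit, X (Sum.inr j) ^ (if j = Sum.inl () then 1 else 0)) ∉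
      extIdealLeft k (Unit ⊕ Fin q ⊕ Unit) (caseListA p a c r) +
      extIdealRight k (Unit ⊕ Fin p ⊕ Unit) (caseListB q b d m)
    rw [Finset.prod_eq_single (Sum.inr (Sum.inl i)) (fun j _ hj => by rw [if_neg hj, pow_zero])
        (fun h => absurd (Finset.mem_univ _) h),
      Finset.prod_eq_single (Sum.inl ()) (fun j _ hj => by rw [if_neg hj, pow_zero])
        (fun h => absurd (Finset.mem_univ _) h), if_pos rfl, if_pos rfl, pow_one, pow_one]
    exact hnm
  · show toricIdeal k (glueList d (a i) (caseListA p a c r) (caseListB q b d m)) =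
      extIdealLeft k (Unit ⊕ Fin q ⊕ Unit) (caseListA p a c r) +
      extIdealRight k (Unit ⊕ Fin p ⊕ Unit) (caseListB q b d m) +
      Ideal.span {((∏ j : Unit ⊕ Fin p ⊕ Unit,
          (X (Sum.inl j) : MvPolynomial ((Unit ⊕ Fin p ⊕ Unit) ⊕ (Unit ⊕ Fin q ⊕ Unit)) k) ^
            (if j = Sum.inr (Sum.inl i) then 1 else 0)) -
          ∏ j : Unit ⊕ Fin q ⊕ Unit, X (Sum.inr j) ^ (if j = Sum.inl () then 1 else 0))}
    rw [Finset.prod_eq_single (Sum.inr (Sum.inl i)) (fun j _ hj => by rw [if_neg hj, pow_zero])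
        (fun h => absurd (Finset.mem_univ _) h),
      Finset.prod_eq_single (Sum.inl ()) (fun j _ hj => by rw [if_neg hj, pow_zero])
        (fun h => absurd (Finset.mem_univ _) h), if_pos rfl, if_pos rfl, pow_one, pow_one]
    exact hEQ
end
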